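/- arXiv:1412.4572 — 5 statements merged into one kernel-verified Lean document; each statement's English description precedes it below -/
import Mathlib

section
/- Let G be a finitely generated group with at least 2 ends, let A be a finite set, and let X ⊆ A^G be a nonempty subshift of finite type. Then there exist σ ∈ X and g ∈ G with g ≠ 1_G such that σ·g = σ. In particular, a finitely generated group with at least 2 ends admits no strongly aperiodic subshift of finite type. -/
/-- The Cayley graph of a group with respect to a (symmetric) set `S`:
`g` and `g'` are adjacent when they differ by right multiplication by an element of `S`. -/
def cayley {G : Type*} [Group G] (S : Set G) : SimpleGraph G :=
  SimpleGraph.fromRel (fun g g' => g⁻¹ * g' ∈ S)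

/-- The closed ball of radius `n` about `g` in the word metric induced by `S`. -/
def ball {G : Type*} [Group G] (S : Set G) (n : ℕ) (g : G) : Set G :=
  {x : G | (cayley S).dist g x ≤ n}

/-- `G` has at least two ends (with respect to the generating set `S`): for some `n`,
deleting the ball of radius `n` about the identity from the Cayley graph leaves at least
two distinct unbounded (infinite) connected components.  (The number of unbounded components
of the complement of `B(n,1)` is nondecreasing in `n`, so this is equivalent to the limit
being at least `2`.) -/
def TwoEnds {G : Type*} [Group G] (S : Set G) : Prop :=
  ∃ n : ℕ, ∃ C₁ C₂ : ((cayley S).induce (ball S n 1)ᶜ).ConnectedComponent,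
    C₁ ≠ C₂ ∧ C₁.supp.Infinite ∧ C₂.supp.Infinite

/-- `X ⊆ A^G` is a subshift of finite type: there is a finite family of forbidden patterns
`p i : F i → A` (`F i ⊆ G` finite) such that `X` consists exactly of those `σ` for which no
translate `σ·g = (x ↦ σ (g * x))` restricts on `F i` to `p i`. -/
def IsSFT {G A : Type*} [Group G] (X : Set (G → A)) : Prop :=
  ∃ (ι : Type) (_ : Finite ι) (F : ι → Finset G) (p : (i : ι) → (↥(F i) → A)),
    X = {σ : G → A | ∀ (g : G) (i : ι), ∃ x : ↥(F i), σ (g * ↑x) ≠ p i x}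

/-- `G` admits a strongly aperiodic subshift of finite type: a nonempty SFT on a finite
alphabet all of whose points have trivial stabilizer under the shift action
`(σ·g)(x) = σ(g*x)`. -/
def HasStronglyAperiodicSFT (G : Type*) [Group G] : Prop :=
  ∃ (A : Type) (_ : Finite A) (X : Set (G → A)), IsSFT X ∧ X.Nonempty ∧
    ∀ σ ∈ X, ∀ g : G, (∀ x : G, σ (g * x) = σ x) → g = 1

open SimpleGraph

section Basic
variable {G : Type*} [Group G] (S : Finset G)

lemma cayley_adj {x y : G} :
    (cayley (S : Set G)).Adj x y ↔ x ≠ y ∧ (x⁻¹ * y ∈ S ∨ y⁻¹ * x ∈ S) := by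
  simp [cayley, SimpleGraph.fromRel_adj]

def mulGHom (a : G) : cayley (S : Set G) →g cayley (S : Set G) where
  toFun := fun x => a * x
  map_rel' := by
    intro x y h
    rw [cayley_adj] at h ⊢
    constructor
    · simpa using h.1
    · rcases h.2 with h2 | h2
      · left; rw [mul_inv_rev]; rw [show x⁻¹ * a⁻¹ * (a * y) = x⁻¹ * y by group]; exact h2
      · right; rw [mul_inv_rev]; rw [show y⁻¹ * a⁻¹ * (a * x) = y⁻¹ * x by group]; exact h2

@[simp] lemma mulGHom_apply (a x : G) : mulGHom S a x = a * x := rfl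

lemma mulGHom_fix (a x : G) : mulGHom S a⁻¹ (a * x) = x := by simp

lemma dist_mul_le (a x y : G) :
    (cayley (S : Set G)).dist (a*x) (a*y) ≤ (cayley (S : Set G)).dist x y := by
  by_cases h : (cayley (S : Set G)).Reachable x y
  · obtain ⟨w, hw⟩ := h.exists_walk_length_eq_dist
    calc (cayley (S : Set G)).dist (a*x) (a*y) ≤ (w.map (mulGHom S a)).length :=
          SimpleGraph.dist_le _
      _ = _ := by rw [SimpleGraph.Walk.length_map, hw]
  · have h2 : ¬ (cayley (S : Set G)).Reachable (a*x) (a*y) := by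
      intro hr
      obtain ⟨w⟩ := hr
      exact h ⟨((w.map (mulGHom S a⁻¹)).copy (mulGHom_fix S a x) (mulGHom_fix S a y))⟩
    rw [SimpleGraph.dist_eq_zero_of_not_reachable h2]
    exact Nat.zero_le _

lemma dist_mul (a x y : G) :
    (cayley (S : Set G)).dist (a*x) (a*y) = (cayley (S : Set G)).dist x y := by
  refine le_antisymm (dist_mul_le S a x y) ?_
  have := dist_mul_le S a⁻¹ (a*x) (a*y)
  simpa using this

lemma cayley_connected (hsym : ∀ s ∈ S, s⁻¹ ∈ S)
    (hgen : Subgroup.closure (S : Set G) = ⊤) : (cayley (S : Set G)).Connected := by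
  have key : ∀ g : G, (cayley (S : Set G)).Reachable 1 g := by
    intro g
    have hg : g ∈ Subgroup.closure (S : Set G) := by rw [hgen]; trivial
    induction hg using Subgroup.closure_induction with
    | mem s hs =>
        by_cases h1 : s = 1
        · rw [h1]
        · exact SimpleGraph.Adj.reachable (by rw [cayley_adj]; exact ⟨Ne.symm h1, Or.inl (by simpa using hs)⟩)
    | one => rfl
    | mul a b _ _ ha hb =>
        refine ha.trans ?_
        obtain ⟨w⟩ := hb
        exact ⟨(w.map (mulGHom S a)).copy (by simp) rfl⟩
    | inv a _ ha =>
        obtain ⟨w⟩ := ha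
        exact Reachable.symm ⟨(w.map (mulGHom S a⁻¹)).copy (by simp) (by simp)⟩
  constructor
  intro x y
  exact (key x).symm.trans (key y)

end Basic

section Walks
variable {G : Type*} [Group G] {S : Finset G} {n : ℕ}

lemma dist_start_le {x y v : G} (w : (cayley (S : Set G)).Walk x y) (hv : v ∈ w.support) :
    (cayley (S : Set G)).dist x v ≤ w.length := by
  classical
  exact le_trans (SimpleGraph.dist_le (w.takeUntil v hv)) (w.length_takeUntil_le hv)

lemma dist_end_le {x y v : G} (w : (cayley (S : Set G)).Walk x y) (hv : v ∈ w.support) :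
    (cayley (S : Set G)).dist v y ≤ w.length := by
  have hv' : v ∈ w.reverse.support := by rwa [SimpleGraph.Walk.support_reverse, List.mem_reverse]
  have := dist_start_le w.reverse hv'
  rwa [SimpleGraph.dist_comm, SimpleGraph.Walk.length_reverse] at this

lemma ball_finite (hc : (cayley (S : Set G)).Connected) (hsym : ∀ s ∈ S, s⁻¹ ∈ S) (k : ℕ) :
    ∀ c : G, {x : G | (cayley (S : Set G)).dist c x ≤ k}.Finite := by
  induction k with
  | zero =>
      intro c
      refine Set.Finite.subset (Set.finite_singleton c) ?_
      intro x hx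
      simp only [Set.mem_setOf_eq, Nat.le_zero] at hx
      simp [(hc.dist_eq_zero_iff).mp hx]
  | succ k ih =>
      intro c
      refine Set.Finite.subset (Set.Finite.union (Set.finite_singleton c)
        (Set.Finite.biUnion S.finite_toSet (fun s _ => ih (c * s)))) ?_
      intro x hx
      simp only [Set.mem_setOf_eq] at hx
      obtain ⟨w, hw⟩ := hc.exists_walk_length_eq_dist c x
      cases w with
      | nil => exact Or.inl rfl
      | @cons u y z h rest =>
          right
          have hyS : c⁻¹ * y ∈ (S : Set G) := by
            rw [cayley_adj] at h
            rcases h.2 with h2 | h2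
            · exact_mod_cast h2
            · have := hsym _ h2
              rw [mul_inv_rev, inv_inv] at this
              exact_mod_cast this
          refine Set.mem_biUnion hyS ?_
          have hd : (cayley (S : Set G)).dist (c * (c⁻¹ * y)) x ≤ rest.length := by
            rw [show c * (c⁻¹ * y) = y by group]
            exact SimpleGraph.dist_le rest
          simp only [SimpleGraph.Walk.length_cons] at hw
          simp only [Set.mem_setOf_eq]
          omega

/-- Reachability avoiding the closed ball of radius `n` about `c`. -/
def RAb (S : Finset G) (n : ℕ) (c x y : G) : Prop :=
  ∃ w : (cayley (S : Set G)).Walk x y, ∀ v ∈ w.support, n < (cayley (S : Set G)).dist c v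

lemma RAb.refl {c x : G} (h : n < (cayley (S : Set G)).dist c x) : RAb S n c x x :=
  ⟨SimpleGraph.Walk.nil, by simpa using h⟩

lemma RAb.notBall_left {c x y : G} (h : RAb S n c x y) : n < (cayley (S : Set G)).dist c x := by
  obtain ⟨w, hw⟩ := h
  exact hw x w.start_mem_support

lemma RAb.notBall_right {c x y : G} (h : RAb S n c x y) : n < (cayley (S : Set G)).dist c y := by
  obtain ⟨w, hw⟩ := h
  exact hw y w.end_mem_support

lemma RAb.symm {c x y : G} (h : RAb S n c x y) : RAb S n c y x := by
  obtain ⟨w, hw⟩ := h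
  exact ⟨w.reverse, by
    intro v hv
    rw [SimpleGraph.Walk.support_reverse, List.mem_reverse] at hv
    exact hw v hv⟩

lemma RAb.trans {c x y z : G} (h : RAb S n c x y) (h' : RAb S n c y z) : RAb S n c x z := by
  obtain ⟨w, hw⟩ := h
  obtain ⟨w', hw'⟩ := h'
  refine ⟨w.append w', ?_⟩
  intro v hv
  rw [SimpleGraph.Walk.mem_support_append_iff] at hv
  rcases hv with hv | hv
  · exact hw v hv
  · exact hw' v hv

lemma RAb.adj {c x y : G} (hx : n < (cayley (S : Set G)).dist c x)
    (hy : n < (cayley (S : Set G)).dist c y) (h : (cayley (S : Set G)).Adj x y) :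
    RAb S n c x y := by
  refine ⟨SimpleGraph.Walk.cons h SimpleGraph.Walk.nil, ?_⟩
  intro v hv
  have : v = x ∨ v = y := by simpa using hv
  rcases this with rfl | rfl
  · exact hx
  · exact hy

lemma RAb_mul {c x y : G} (a : G) (h : RAb S n c x y) : RAb S n (a*c) (a*x) (a*y) := by
  obtain ⟨w, hw⟩ := h
  refine ⟨w.map (mulGHom S a), ?_⟩
  intro v hv
  have hv2 : v ∈ w.support.map (mulGHom S a) := by rw [← SimpleGraph.Walk.support_map]; exact hv
  rw [List.mem_map] at hv2
  obtain ⟨u, hu, rfl⟩ := hv2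
  rw [mulGHom_apply, dist_mul]
  exact hw u hu

lemma RAb_mul_iff {c x y : G} (a : G) : RAb S n (a*c) (a*x) (a*y) ↔ RAb S n c x y := by
  constructor
  · intro h
    have := RAb_mul a⁻¹ h
    simpa using this
  · exact RAb_mul a

/-- The union of components of the complement of the ball `B(n, a)` other than
the one containing the basepoint `b`. -/
def HH (S : Finset G) (n : ℕ) (a b : G) : Set G :=
  {x | n < (cayley (S : Set G)).dist a x ∧ ¬ RAb S n a b x}

lemma HH_exit {a b y z : G} (hy : y ∈ HH S n a b) (hz : z ∉ HH S n a b)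
    (w : (cayley (S : Set G)).Walk y z) :
    ∃ v ∈ w.support, (cayley (S : Set G)).dist a v ≤ n := by
  by_contra hcon
  push_neg at hcon
  have hra : RAb S n a y z := ⟨w, fun v hv => hcon v hv⟩
  have hz2 : n < (cayley (S : Set G)).dist a z := hra.notBall_right
  have hbz : RAb S n a b z := by
    by_contra h2
    exact hz ⟨hz2, h2⟩
  exact hy.2 (hbz.trans hra.symm)

lemma HH_mul {a b x : G} (c : G) : c * x ∈ HH S n (c*a) (c*b) ↔ x ∈ HH S n a b := by
  unfold HH
  simp only [Set.mem_setOf_eq, dist_mul, RAb_mul_iff]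

lemma frontier_lemma (hc : (cayley (S : Set G)).Connected) {c : G} :
    ∀ {x z : G} (_ : (cayley (S : Set G)).Walk x z), n < (cayley (S : Set G)).dist c x →
      (cayley (S : Set G)).dist c z ≤ n →
    ∃ y, RAb S n c x y ∧ n < (cayley (S : Set G)).dist c y ∧
      (cayley (S : Set G)).dist c y ≤ n + 1 := by
  intro x z w
  induction w with
  | nil => intro hx hz; omega
  | @cons u u' z' h rest ih =>
      intro hx hz
      by_cases hu' : n < (cayley (S : Set G)).dist c u'
      · obtain ⟨y, hy1, hy2, hy3⟩ := ih hu' hz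
        exact ⟨y, (RAb.adj hx hu' h).trans hy1, hy2, hy3⟩
      · refine ⟨u, RAb.refl hx, hx, ?_⟩
        have hadj : (cayley (S : Set G)).dist u' u ≤ 1 :=
          SimpleGraph.dist_le (SimpleGraph.Walk.cons h.symm SimpleGraph.Walk.nil)
        have := hc.dist_triangle (u := c) (v := u') (w := u)
        omega

end Walks

section Bridge
variable {G : Type*} [Group G] {S : Finset G} {n : ℕ}

lemma mem_compl_ball_iff {x : G} :
    x ∈ (ball (S : Set G) n 1)ᶜ ↔ n < (cayley (S : Set G)).dist 1 x := by
  simp only [Set.mem_compl_iff, _root_.ball, Set.mem_setOf_eq, not_le]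

lemma reach_to_RAb' {u v : ↥((ball (S : Set G) n 1)ᶜ)}
    (h : ((cayley (S : Set G)).induce (ball (S : Set G) n 1)ᶜ).Reachable u v) :
    RAb S n 1 ↑u ↑v := by
  obtain ⟨w⟩ := h
  induction w with
  | nil =>
      rename_i a
      exact RAb.refl (mem_compl_ball_iff.mp a.2)
  | @cons a b c h rest ih =>
      have hadj : (cayley (S : Set G)).Adj ↑a ↑b := h
      exact (RAb.adj (mem_compl_ball_iff.mp a.2) (mem_compl_ball_iff.mp b.2) hadj).trans ih

lemma RAb_to_reach : ∀ {x z : G} (w : (cayley (S : Set G)).Walk x z)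
    (_ : ∀ v ∈ w.support, n < (cayley (S : Set G)).dist 1 v)
    (hx : x ∈ (ball (S : Set G) n 1)ᶜ) (hz : z ∈ (ball (S : Set G) n 1)ᶜ),
    ((cayley (S : Set G)).induce (ball (S : Set G) n 1)ᶜ).Reachable ⟨x, hx⟩ ⟨z, hz⟩ := by
  intro x z w
  induction w with
  | nil => intro _ hx hz; rfl
  | @cons a b c h rest ih =>
      intro hw hx hz
      have hb : b ∈ (ball (S : Set G) n 1)ᶜ := by
        rw [mem_compl_ball_iff]
        exact hw b (by simp [SimpleGraph.Walk.support_cons])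
      have hadj : ((cayley (S : Set G)).induce (ball (S : Set G) n 1)ᶜ).Adj ⟨a, hx⟩ ⟨b, hb⟩ := h
      refine hadj.reachable.trans (ih ?_ hb hz)
      intro v hv
      exact hw v (by simp [SimpleGraph.Walk.support_cons, hv])

lemma ends_extract
    (h : ∃ C₁ C₂ : ((cayley (S : Set G)).induce (ball (S : Set G) n 1)ᶜ).ConnectedComponent,
      C₁ ≠ C₂ ∧ C₁.supp.Infinite ∧ C₂.supp.Infinite) :
    ∃ c₁ c₂ : G, n < (cayley (S : Set G)).dist 1 c₁ ∧ n < (cayley (S : Set G)).dist 1 c₂ ∧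
      ¬ RAb S n 1 c₁ c₂ ∧
      {x | RAb S n 1 c₁ x}.Infinite ∧ {x | RAb S n 1 c₂ x}.Infinite := by
  obtain ⟨C₁, C₂, hne, hi1, hi2⟩ := h
  obtain ⟨v₁, hv₁⟩ := C₁.exists_rep
  obtain ⟨v₂, hv₂⟩ := C₂.exists_rep
  refine ⟨↑v₁, ↑v₂, mem_compl_ball_iff.mp v₁.2, mem_compl_ball_iff.mp v₂.2, ?_, ?_, ?_⟩
  · intro hra
    obtain ⟨w, hw⟩ := hra
    have := RAb_to_reach w (fun v hv => hw v hv) v₁.2 v₂.2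
    exact hne (by rw [← hv₁, ← hv₂]; exact Quot.sound this)
  · refine Set.Infinite.mono ?_ ((hi1.image (Set.injOn_of_injective Subtype.val_injective)))
    rintro y ⟨u, hu, rfl⟩
    rw [SimpleGraph.ConnectedComponent.mem_supp_iff, ← hv₁] at hu
    exact reach_to_RAb' (SimpleGraph.ConnectedComponent.exact hu.symm)
  · refine Set.Infinite.mono ?_ ((hi2.image (Set.injOn_of_injective Subtype.val_injective)))
    rintro y ⟨u, hu, rfl⟩
    rw [SimpleGraph.ConnectedComponent.mem_supp_iff, ← hv₂] at hu
    exact reach_to_RAb' (SimpleGraph.ConnectedComponent.exact hu.symm)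

end Bridge

section Counting
variable {G : Type*} [Group G] {S : Finset G} {n : ℕ}

lemma counting {x y : G} (w : (cayley (S : Set G)).Walk x y) (s : Finset ℤ) (c : ℤ → G)
    (hmeet : ∀ l ∈ s, ∃ v ∈ w.support, (cayley (S : Set G)).dist (c l) v ≤ n)
    (hdisj : ∀ l ∈ s, ∀ l' ∈ s, l ≠ l' → ∀ v : G,
      (cayley (S : Set G)).dist (c l) v ≤ n → (cayley (S : Set G)).dist (c l') v ≤ n → False) :
    s.card ≤ w.support.length := by
  classical
  have key : s.card ≤ w.support.toFinset.card := by
    refine Finset.card_le_card_of_injOn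
      (fun l => if h : l ∈ s then (hmeet l h).choose else x) ?_ ?_
    · intro l hl
      dsimp only
      rw [dif_pos (Finset.mem_coe.mp hl), Finset.mem_coe, List.mem_toFinset]
      exact (hmeet l hl).choose_spec.1
    · intro l hl l' hl' heq
      simp only [Finset.mem_coe] at hl hl'
      dsimp only at heq
      rw [dif_pos hl, dif_pos hl'] at heq
      by_contra hne
      exact hdisj l hl l' hl' hne (hmeet l hl).choose
        (hmeet l hl).choose_spec.2 (heq ▸ (hmeet l' hl').choose_spec.2)
  exact le_trans key (w.support.toFinset_card_le)

lemma HH_infinite (hc : (cayley (S : Set G)).Connected) {c₁ c₂ : G}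
    (hnra : ¬ RAb S n 1 c₁ c₂)
    (hin1 : {x | RAb S n 1 c₁ x}.Infinite) (hin2 : {x | RAb S n 1 c₂ x}.Infinite)
    {a : G} (ha : n < (cayley (S : Set G)).dist 1 a) :
    (HH S n a 1).Infinite := by
  have hsplit : (∀ x, RAb S n 1 c₁ x → ¬ RAb S n 1 a⁻¹ x) ∨
      (∀ x, RAb S n 1 c₂ x → ¬ RAb S n 1 a⁻¹ x) := by
    by_contra hcon
    push_neg at hcon
    obtain ⟨⟨x₁, hx₁, hax₁⟩, ⟨x₂, hx₂, hax₂⟩⟩ := hcon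
    exact hnra (((hx₁.trans hax₁.symm).trans hax₂).trans hx₂.symm)
  have himg : ∀ c : G, (∀ x, RAb S n 1 c x → ¬ RAb S n 1 a⁻¹ x) →
      ((a * ·) '' {x | RAb S n 1 c x}) ⊆ HH S n a 1 := by
    rintro c hc' y ⟨x, hx, rfl⟩
    constructor
    · have : (cayley (S : Set G)).dist (a * 1) (a * x) = (cayley (S : Set G)).dist 1 x :=
        dist_mul S a 1 x
      rw [mul_one] at this
      rw [this]
      exact hx.notBall_right
    · intro hra
      refine hc' x hx ?_
      have : RAb S n (a⁻¹ * a) (a⁻¹ * 1) (a⁻¹ * (a * x)) := RAb_mul a⁻¹ hra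
      simpa [mul_one] using this
  rcases hsplit with h | h
  · exact Set.Infinite.mono (himg c₁ h)
      (hin1.image (Set.injOn_of_injective (mul_right_injective a)))
  · exact Set.Infinite.mono (himg c₂ h)
      (hin2.image (Set.injOn_of_injective (mul_right_injective a)))

end Counting

section Nest
variable {G : Type*} [Group G] {S : Finset G} {n : ℕ}

lemma step_nest (hc : (cayley (S : Set G)).Connected) {a b : G}
    (hb : b ∈ HH S n a 1)
    (hd : (cayley (S : Set G)).dist 1 a + 2*n + 1 < (cayley (S : Set G)).dist 1 b) :
    (∀ x, (cayley (S : Set G)).dist b x ≤ n → x ∈ HH S n a 1) ∧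
      HH S n b 1 ⊆ HH S n a 1 := by
  classical
  have hab : (cayley (S : Set G)).dist 1 a + (cayley (S : Set G)).dist a b
      ≥ (cayley (S : Set G)).dist 1 b := hc.dist_triangle
  have W1 : ∀ x, (cayley (S : Set G)).dist b x ≤ n →
      RAb S n a x b ∧ n < (cayley (S : Set G)).dist a x := by
    intro x hx
    obtain ⟨w, hwlen⟩ := hc.exists_walk_length_eq_dist b x
    have hvert : ∀ v ∈ w.support, n < (cayley (S : Set G)).dist a v := by
      intro v hv
      have h1 : (cayley (S : Set G)).dist b v ≤ w.length := dist_start_le w hv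
      have h2 : (cayley (S : Set G)).dist a b ≤ (cayley (S : Set G)).dist a v +
          (cayley (S : Set G)).dist v b := hc.dist_triangle
      have h3 : (cayley (S : Set G)).dist v b = (cayley (S : Set G)).dist b v :=
        SimpleGraph.dist_comm
      omega
    refine ⟨⟨w.reverse, ?_⟩, ?_⟩
    · intro v hv
      rw [SimpleGraph.Walk.support_reverse, List.mem_reverse] at hv
      exact hvert v hv
    · exact hvert x w.end_mem_support
  constructor
  · intro x hx
    refine ⟨(W1 x hx).2, ?_⟩
    intro hra
    exact hb.2 (hra.trans (W1 x hx).1)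
  · intro x hx
    have hax : n < (cayley (S : Set G)).dist a x := by
      by_contra hcon
      push_neg at hcon
      obtain ⟨w1, hw1⟩ := hc.exists_walk_length_eq_dist 1 a
      obtain ⟨w2, hw2⟩ := hc.exists_walk_length_eq_dist a x
      refine hx.2 ⟨w1.append w2, ?_⟩
      intro v hv
      rw [SimpleGraph.Walk.mem_support_append_iff] at hv
      have hv1 : (cayley (S : Set G)).dist 1 v ≤ (cayley (S : Set G)).dist 1 a + n := by
        rcases hv with hv | hv
        · have := dist_start_le w1 hv
          omega
        · have h1 := dist_start_le w2 hv
          have h2 : (cayley (S : Set G)).dist 1 v ≤ (cayley (S : Set G)).dist 1 a +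
              (cayley (S : Set G)).dist a v := hc.dist_triangle
          omega
      have h3 : (cayley (S : Set G)).dist 1 b ≤ (cayley (S : Set G)).dist 1 v +
          (cayley (S : Set G)).dist v b := hc.dist_triangle
      have h4 : (cayley (S : Set G)).dist v b = (cayley (S : Set G)).dist b v :=
        SimpleGraph.dist_comm
      omega
    refine ⟨hax, ?_⟩
    rintro ⟨w, hw⟩
    by_cases hhit : ∀ v ∈ w.support, n < (cayley (S : Set G)).dist b v
    · exact hx.2 ⟨w, hhit⟩
    · push_neg at hhit
      obtain ⟨vv, hvv, hvvd⟩ := hhit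
      have pre : RAb S n a 1 vv := by
        refine ⟨w.takeUntil vv hvv, ?_⟩
        intro v hv
        exact hw v (w.support_takeUntil_subset hvv hv)
      exact hb.2 (pre.trans (W1 vv hvvd).1)
end Nest

theorem main_periodic {G : Type*} [Group G] (S : Finset G)
    (hsym : ∀ s ∈ S, s⁻¹ ∈ S) (hgen : Subgroup.closure (S : Set G) = ⊤)
    (h2 : TwoEnds (S : Set G))
    {A : Type*} [Finite A] (X : Set (G → A)) (hX : IsSFT X) (hne : X.Nonempty) :
    ∃ σ ∈ X, ∃ g : G, g ≠ 1 ∧ ∀ x : G, σ (g * x) = σ x := by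
  classical
  obtain ⟨n, hn2⟩ := h2
  obtain ⟨ι, hι, F, p, hXdef⟩ := hX
  obtain ⟨σ, hσX⟩ := hne
  have hσ : ∀ (g : G) (i : ι), ∃ x : ↥(F i), σ (g * ↑x) ≠ p i x := by
    rw [hXdef] at hσX; exact hσX
  have hc : (cayley (S : Set G)).Connected := cayley_connected S hsym hgen
  haveI := Fintype.ofFinite ι
  obtain ⟨r, hr⟩ : ∃ r : ℕ, ∀ (i : ι) (x : G), x ∈ F i → (cayley (S : Set G)).dist 1 x ≤ r :=
    ⟨(Finset.univ.biUnion F).sup (fun x => (cayley (S : Set G)).dist 1 x),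
     fun i x hx => Finset.le_sup (Finset.mem_biUnion.mpr ⟨i, Finset.mem_univ i, hx⟩)⟩
  obtain ⟨c₁, c₂, hnc₁, hnc₂, hnra, hin1, hin2⟩ := ends_extract hn2
  -- distance of inverses
  have dinv : ∀ a : G, (cayley (S : Set G)).dist 1 a⁻¹ = (cayley (S : Set G)).dist 1 a := by
    intro a
    have h := dist_mul S a⁻¹ a 1
    rw [inv_mul_cancel, mul_one] at h
    rw [h, SimpleGraph.dist_comm]
  -- the choice step
  have stepchoice : ∀ a : G, n < (cayley (S : Set G)).dist 1 a →
      ∃ b : G, b ∈ HH S n a 1 ∧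
        (cayley (S : Set G)).dist 1 a + 2*n + 1 < (cayley (S : Set G)).dist 1 b ∧
        n < (cayley (S : Set G)).dist 1 b := by
    intro a ha
    have hinf := (HH_infinite hc hnra hin1 hin2 ha).diff
      (ball_finite hc hsym ((cayley (S : Set G)).dist 1 a + 2*n + 1) 1)
    obtain ⟨b, hb⟩ := hinf.nonempty
    refine ⟨b, hb.1, ?_, ?_⟩
    · have := hb.2
      simp only [Set.mem_setOf_eq, not_le] at this
      exact this
    · have := hb.2
      simp only [Set.mem_setOf_eq, not_le] at this
      omega
  -- the sequence
  let seq : ℕ → {g : G // n < (cayley (S : Set G)).dist 1 g} :=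
    fun k => Nat.rec ⟨c₁, hnc₁⟩
      (fun _ prev => ⟨(stepchoice prev.1 prev.2).choose,
        (stepchoice prev.1 prev.2).choose_spec.2.2⟩) k
  have seq_succ : ∀ k : ℕ, (seq (k+1)).1 ∈ HH S n (seq k).1 1 ∧
      (cayley (S : Set G)).dist 1 (seq k).1 + 2*n + 1 <
        (cayley (S : Set G)).dist 1 (seq (k+1)).1 := by
    intro k
    have h := (stepchoice (seq k).1 (seq k).2).choose_spec
    exact ⟨h.1, h.2.1⟩
  have seq_mono : ∀ i j : ℕ, i < j →
      (cayley (S : Set G)).dist 1 (seq i).1 < (cayley (S : Set G)).dist 1 (seq j).1 := by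
    intro i j h
    induction j with
    | zero => omega
    | succ j ih =>
        rcases Nat.lt_succ_iff_lt_or_eq.mp h with h' | rfl
        · have := (seq_succ j).2; have := ih h'; omega
        · have := (seq_succ i).2; omega
  have chain : ∀ i j : ℕ, i < j →
      HH S n (seq j).1 1 ⊆ HH S n (seq i).1 1 ∧
      (∀ x, (cayley (S : Set G)).dist (seq j).1 x ≤ n → x ∈ HH S n (seq i).1 1) := by
    intro i j h
    induction j with
    | zero => omega
    | succ j ih =>
        have hstep := step_nest hc (seq_succ j).1 (seq_succ j).2
        rcases Nat.lt_succ_iff_lt_or_eq.mp h with h' | rfl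
        · exact ⟨fun x hx => (ih h').1 (hstep.2 hx), fun x hx => (ih h').1 (hstep.1 x hx)⟩
        · exact ⟨hstep.2, hstep.1⟩
  -- pigeonhole data
  have wsel : ∀ k : ℕ, ∃ y, RAb S n 1 ((seq k).1)⁻¹ y ∧
      n < (cayley (S : Set G)).dist 1 y ∧ (cayley (S : Set G)).dist 1 y ≤ n + 1 := by
    intro k
    have hinv : n < (cayley (S : Set G)).dist 1 ((seq k).1)⁻¹ := by
      rw [dinv]; exact (seq k).2
    obtain ⟨w, _⟩ := hc.exists_walk_length_eq_dist ((seq k).1)⁻¹ 1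
    exact frontier_lemma hc w hinv (by rw [SimpleGraph.dist_self]; omega)
  have hBMfin : Set.Finite {x : G | (cayley (S : Set G)).dist 1 x ≤ n + 2*r} :=
    ball_finite hc hsym (n + 2*r) 1
  have hBYfin : Set.Finite {x : G | (cayley (S : Set G)).dist 1 x ≤ n + 1} :=
    ball_finite hc hsym (n + 1) 1
  haveI : Finite ↥{x : G | (cayley (S : Set G)).dist 1 x ≤ n + 2*r} := hBMfin
  haveI : Finite ↥{x : G | (cayley (S : Set G)).dist 1 x ≤ n + 1} := hBYfin
  let f : ℕ → (↥{x : G | (cayley (S : Set G)).dist 1 x ≤ n + 2*r} → A) ×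
      ↥{x : G | (cayley (S : Set G)).dist 1 x ≤ n + 1} :=
    fun k => (fun x => σ ((seq k).1 * ↑x), ⟨(wsel k).choose, (wsel k).choose_spec.2.2⟩)
  obtain ⟨i0, j0, hne0, hfeq0⟩ := Finite.exists_ne_map_eq_of_infinite f
  -- the main construction, given two matched indices
  suffices main2 : ∀ i j : ℕ, i < j → f i = f j →
      ∃ σ' ∈ X, ∃ g : G, g ≠ 1 ∧ ∀ x : G, σ' (g * x) = σ' x by
    rcases lt_or_gt_of_ne hne0 with h | h
    · exact main2 i0 j0 h hfeq0
    · exact main2 j0 i0 h hfeq0.symm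
  intro i j hij hfeq
  set u := (seq i).1 with hu_def
  set v := (seq j).1 with hv_def
  have hu : n < (cayley (S : Set G)).dist 1 u := (seq i).2
  have hv : n < (cayley (S : Set G)).dist 1 v := (seq j).2
  have pat : ∀ x : G, (cayley (S : Set G)).dist 1 x ≤ n + 2*r → σ (u * x) = σ (v * x) := by
    intro x hx
    exact congrFun (congrArg Prod.fst hfeq) ⟨x, hx⟩
  have hRA : RAb S n 1 u⁻¹ v⁻¹ := by
    have h2' : (wsel i).choose = (wsel j).choose := by
      have := congrArg Prod.snd hfeq
      exact Subtype.ext_iff.mp this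
    exact ((wsel i).choose_spec.1.trans (h2' ▸ (wsel j).choose_spec.1).symm)
  set t := v * u⁻¹ with ht_def
  have ht1 : t ≠ 1 := by
    intro h
    have hvu : v = u := mul_inv_eq_one.mp h
    have hlt := seq_mono i j hij
    rw [← hu_def, ← hv_def, hvu] at hlt
    omega
  have hBv : ∀ x, (cayley (S : Set G)).dist v x ≤ n → x ∈ HH S n u 1 := (chain i j hij).2
  have hHsub : HH S n v 1 ⊆ HH S n u 1 := (chain i j hij).1
  have hvH : v ∈ HH S n u 1 := hBv v (by rw [SimpleGraph.dist_self]; omega)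
  have hRAvt : RAb S n v 1 t := by
    have h1 : RAb S n (v*1) (v*u⁻¹) (v*v⁻¹) := RAb_mul v hRA
    rw [mul_one, mul_inv_cancel] at h1
    exact h1.symm
  have htH : ∀ x : G, t⁻¹ * x ∈ HH S n u 1 ↔ x ∈ HH S n v 1 := by
    intro x
    have h1 : t * (t⁻¹ * x) ∈ HH S n (t*u) (t*1) ↔ t⁻¹ * x ∈ HH S n u 1 := HH_mul t
    rw [mul_inv_cancel_left, mul_one] at h1
    have htu : t * u = v := by rw [ht_def]; group
    rw [htu] at h1
    rw [← h1]
    constructor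
    · rintro ⟨hd1, hra1⟩
      exact ⟨hd1, fun hra2 => hra1 (hRAvt.symm.trans hra2)⟩
    · rintro ⟨hd1, hra1⟩
      exact ⟨hd1, fun hra2 => hra1 (hRAvt.trans hra2)⟩
  have htmem : ∀ x : G, x ∈ HH S n u 1 → t * x ∈ HH S n u 1 := by
    intro x hx
    refine hHsub ((htH (t*x)).mp ?_)
    rw [inv_mul_cancel_left]
    exact hx
  -- the ℤ-indexed nested sets
  set Hl : ℤ → Set G := fun l => {x | t^(-l) * x ∈ HH S n u 1} with hHl_def
  have hHl0 : ∀ x, x ∈ Hl 0 ↔ x ∈ HH S n u 1 := by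
    intro x; simp [hHl_def]
  have hstepl : ∀ (l : ℤ) (x : G), x ∈ Hl (l+1) → x ∈ Hl l := by
    intro l x hx
    have h1 : t * (t^(-(l+1)) * x) ∈ HH S n u 1 := htmem _ hx
    rw [← mul_assoc, show t * t^(-(l+1)) = t^(-l) by
      rw [← zpow_one_add]; congr 1; ring] at h1
    exact h1
  have hmonoN : ∀ (c : ℕ) (l : ℤ) (x : G), x ∈ Hl (l + c) → x ∈ Hl l := by
    intro c
    induction c with
    | zero => intro l x hx; simpa using hx
    | succ c ih =>
        intro l x hx
        refine hstepl l x (ih (l+1) x ?_)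
        rw [show (l+1) + (c:ℤ) = l + ((c:ℤ)+1) by ring]
        exact_mod_cast hx
  have hmono : ∀ (l l' : ℤ), l ≤ l' → ∀ x : G, x ∈ Hl l' → x ∈ Hl l := by
    intro l l' hle x hx
    have heq : l' = l + ((l' - l).toNat : ℤ) := by omega
    exact hmonoN (l' - l).toNat l x (heq ▸ hx)
  have hHleq : ∀ (l : ℤ) (x : G), x ∈ Hl l ↔ x ∈ HH S n (t^l * u) (t^l) := by
    intro l x
    have h1 : t^l * (t^(-l) * x) ∈ HH S n (t^l * u) (t^l * 1) ↔
        t^(-l) * x ∈ HH S n u 1 := HH_mul (t^l)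
    rw [← mul_assoc, show t^l * t^(-l) = (1:G) by
      rw [← zpow_add]; norm_num, one_mul, mul_one] at h1
    exact h1.symm
  have hBl : ∀ (l : ℤ), 1 ≤ l → ∀ x : G,
      (cayley (S : Set G)).dist (t^l * u) x ≤ n → x ∈ HH S n u 1 := by
    intro l hl x hx
    have hkey : x ∈ Hl (l-1) := by
      show t^(-(l-1)) * x ∈ HH S n u 1
      refine hBv _ ?_
      have h1 : (cayley (S : Set G)).dist (t^(-(l-1)) * (t^l * u)) (t^(-(l-1)) * x) =
          (cayley (S : Set G)).dist (t^l * u) x := dist_mul S _ _ _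
      rw [← mul_assoc, show t^(-(l-1)) * t^l = t by
        rw [← zpow_add]; rw [show -(l-1) + l = 1 by ring, zpow_one]] at h1
      rw [show t * u = v by rw [ht_def]; group] at h1
      omega
    have := hmono 0 (l-1) (by omega) x hkey
    exact (hHl0 x).mp this
  have hdisj : ∀ (l l' : ℤ), l < l' → ∀ x : G,
      (cayley (S : Set G)).dist (t^l * u) x ≤ n →
      (cayley (S : Set G)).dist (t^(l') * u) x ≤ n → False := by
    intro l l' hll x hx1 hx2
    have h1 : (cayley (S : Set G)).dist (t^(-l) * (t^l * u)) (t^(-l) * x) =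
        (cayley (S : Set G)).dist (t^l * u) x := dist_mul S _ _ _
    rw [← mul_assoc, show t^(-l) * t^l = (1:G) by rw [← zpow_add]; norm_num, one_mul] at h1
    have h2 : (cayley (S : Set G)).dist (t^(-l) * (t^(l') * u)) (t^(-l) * x) =
        (cayley (S : Set G)).dist (t^(l') * u) x := dist_mul S _ _ _
    rw [← mul_assoc, show t^(-l) * t^(l') = t^(l'-l) by rw [← zpow_add]; congr 1; ring] at h2
    have hmem : t^(-l) * x ∈ HH S n u 1 := hBl (l'-l) (by omega) _ (by omega)
    have := hmem.1
    omega
  -- upper bound on levels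
  have hub : ∀ x : G, ∃ l : ℤ, 1 ≤ l ∧ x ∉ Hl l := by
    intro x
    by_contra hcon
    push_neg at hcon
    have h1notHJ : (1:G) ∉ HH S n v 1 := by
      intro h
      exact h.2 (RAb.refl (by rw [SimpleGraph.dist_comm]; exact hv))
    have h1l : ∀ l : ℤ, 1 ≤ l → (1:G) ∉ Hl l := by
      intro l hl h
      have h1 : (1:G) ∈ Hl 1 := hmono 1 l hl _ h
      have h2 : t^(-(1:ℤ)) * 1 ∈ HH S n u 1 := h1
      rw [zpow_neg_one] at h2
      exact h1notHJ ((htH 1).mp (by rwa [mul_one] at h2 ⊢))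
    obtain ⟨w, hwlen⟩ := hc.exists_walk_length_eq_dist x 1
    have hcount := counting (n := n) w (Finset.Icc 1 ((cayley (S : Set G)).dist x 1 + 2 : ℤ))
      (fun l => t^l * u) ?_ ?_
    · rw [Int.card_Icc] at hcount
      have hlen : w.support.length = w.length + 1 := SimpleGraph.Walk.length_support w
      omega
    · intro l hl
      rw [Finset.mem_Icc] at hl
      have hx : x ∈ Hl l := hcon l hl.1
      have h1 : (1:G) ∉ HH S n (t^l * u) (t^l) := fun hmem => h1l l hl.1 ((hHleq l 1).mpr hmem)
      obtain ⟨vv, hvv, hvvd⟩ := HH_exit ((hHleq l x).mp hx) h1 w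
      exact ⟨vv, hvv, hvvd⟩
    · intro l hl l' hl' hne' vv h1 h2
      rcases lt_or_gt_of_ne hne' with h | h
      · exact hdisj l l' h vv h1 h2
      · exact hdisj l' l h vv h2 h1
  -- lower bound on levels
  have hlb : ∀ x : G, ∃ l : ℤ, x ∈ Hl l := by
    intro x
    by_contra hcon
    push_neg at hcon
    have hvl : ∀ l : ℤ, l ≤ 0 → v ∈ Hl l := by
      intro l hl
      have key : ∀ c : ℤ, 0 ≤ c → t^c * v ∈ HH S n u 1 := by
        refine Int.le_induction ?_ ?_
        · rw [zpow_zero, one_mul]; exact hvH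
        · intro c hc0 ih
          rw [show t^(c+1) = t * t^c by rw [show c+1 = 1+c by ring, zpow_add, zpow_one], mul_assoc]
          exact htmem _ ih
      have : t^(-l) * v ∈ HH S n u 1 := key (-l) (by omega)
      exact this
    obtain ⟨w, hwlen⟩ := hc.exists_walk_length_eq_dist x v
    have hcount := counting (n := n) w
      (Finset.Icc (-((cayley (S : Set G)).dist x v + 2) : ℤ) 0) (fun l => t^l * u) ?_ ?_
    · rw [Int.card_Icc] at hcount
      have hlen : w.support.length = w.length + 1 := SimpleGraph.Walk.length_support w
      omega
    · intro l hl
      rw [Finset.mem_Icc] at hl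
      have hxv : v ∈ Hl l := hvl l hl.2
      have hxn : x ∉ HH S n (t^l * u) (t^l) := fun hmem => hcon l ((hHleq l x).mpr hmem)
      obtain ⟨vv, hvv, hvvd⟩ := HH_exit ((hHleq l v).mp hxv) hxn w.reverse
      rw [SimpleGraph.Walk.support_reverse, List.mem_reverse] at hvv
      exact ⟨vv, hvv, hvvd⟩
    · intro l hl l' hl' hne' vv h1 h2
      rcases lt_or_gt_of_ne hne' with h | h
      · exact hdisj l l' h vv h1 h2
      · exact hdisj l' l h vv h2 h1
  -- the level function
  have νex : ∀ x : G, ∃ k : ℤ, x ∈ Hl k ∧ x ∉ Hl (k+1) := by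
    intro x
    obtain ⟨k₀, hk₀⟩ := hlb x
    obtain ⟨l₁, hl₁, hnot⟩ := hub x
    have hk0l1 : k₀ < l₁ := by
      by_contra hcc
      push_neg at hcc
      exact hnot (hmono l₁ k₀ hcc x hk₀)
    have hQ : ∃ j : ℕ, x ∉ Hl (k₀ + (j:ℤ) + 1) := by
      refine ⟨(l₁ - k₀ - 1).toNat, ?_⟩
      rw [show k₀ + ((l₁ - k₀ - 1).toNat : ℤ) + 1 = l₁ by omega]
      exact hnot
    have hj₀ := Nat.find_spec hQ
    set j₀ := Nat.find hQ with hj₀def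
    refine ⟨k₀ + (j₀:ℤ), ?_, hj₀⟩
    rcases Nat.eq_zero_or_pos j₀ with h0 | h0
    · rw [h0]
      push_cast
      rw [add_zero]
      exact hk₀
    · have hmin : ¬ (x ∉ Hl (k₀ + ((j₀ - 1 : ℕ):ℤ) + 1)) := Nat.find_min hQ (by omega)
      push_neg at hmin
      rw [show k₀ + ((j₀ - 1 : ℕ):ℤ) + 1 = k₀ + (j₀:ℤ) by push_cast [Nat.cast_sub (by omega : 1 ≤ j₀)]; ring] at hmin
      exact hmin
  set ν : G → ℤ := fun x => (νex x).choose with hν_def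
  have νm : ∀ x : G, x ∈ Hl (ν x) ∧ x ∉ Hl (ν x + 1) := fun x => (νex x).choose_spec
  have νmem' : ∀ (x : G) (l : ℤ), l ≤ ν x → x ∈ Hl l := fun x l h => hmono l (ν x) h x (νm x).1
  have νnot' : ∀ (x : G) (l : ℤ), ν x < l → x ∉ Hl l :=
    fun x l h hx => (νm x).2 (hmono (ν x + 1) l (by omega) x hx)
  have νuniq : ∀ (x : G) (k : ℤ), x ∈ Hl k → x ∉ Hl (k+1) → ν x = k := by
    intro x k h1 h2
    by_contra hcc
    rcases lt_or_gt_of_ne hcc with h | h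
    · exact (νnot' x k h) h1
    · exact h2 (νmem' x (k+1) (by omega))
  have νt : ∀ x : G, ν (t * x) = ν x + 1 := by
    intro x
    refine νuniq (t*x) (ν x + 1) ?_ ?_
    · show t^(-(ν x + 1)) * (t * x) ∈ HH S n u 1
      rw [← mul_assoc, show t^(-(ν x + 1)) * t = t^(-(ν x)) by
        rw [← zpow_add_one]; congr 1; ring]
      exact (νm x).1
    · intro hmem
      have : t^(-(ν x + 1 + 1)) * (t * x) ∈ HH S n u 1 := hmem
      rw [← mul_assoc, show t^(-(ν x + 1 + 1)) * t = t^(-(ν x + 1)) by rw [← zpow_add_one]; congr 1; ring] at this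
      exact (νm x).2 this
  -- key local constancy lemma
  have key : ∀ (y₀ y : G), (cayley (S : Set G)).dist y₀ y ≤ 2*r →
      ∀ (c : ℕ) (l : ℤ), ν y₀ ≤ l → l + c = ν y →
      σ (t^(-l) * y) = σ (t^(-(ν y)) * y) := by
    intro y₀ y hdy c
    induction c with
    | zero =>
        intro l hl heq
        rw [show l = ν y by omega]
    | succ c ih =>
        intro l hl heq
        have hstepeq : σ (t^(-l) * y) = σ (t^(-(l+1)) * y) := by
          have hyl : y ∈ Hl (l+1) := νmem' y (l+1) (by omega)
          have hy0l : y₀ ∉ Hl (l+1) := νnot' y₀ (l+1) (by omega)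
          obtain ⟨w, hwlen⟩ := hc.exists_walk_length_eq_dist y y₀
          obtain ⟨vv, hvv, hvvd⟩ := HH_exit ((hHleq (l+1) y).mp hyl)
            (fun hmem => hy0l ((hHleq (l+1) y₀).mpr hmem)) w
          have hd1 : (cayley (S : Set G)).dist y vv ≤ 2*r := by
            have := dist_start_le w hvv
            have hcomm : (cayley (S : Set G)).dist y y₀ = (cayley (S : Set G)).dist y₀ y :=
              SimpleGraph.dist_comm
            omega
          have hd2 : (cayley (S : Set G)).dist (t^(l+1) * u) y ≤ n + 2*r := by
            have h1 : (cayley (S : Set G)).dist (t^(l+1) * u) y ≤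
                (cayley (S : Set G)).dist (t^(l+1) * u) vv +
                (cayley (S : Set G)).dist vv y := hc.dist_triangle
            have hcomm : (cayley (S : Set G)).dist vv y = (cayley (S : Set G)).dist y vv :=
              SimpleGraph.dist_comm
            omega
          have hdx : (cayley (S : Set G)).dist 1 (u⁻¹ * (t^(-(l+1)) * y)) ≤ n + 2*r := by
            have h1 : (cayley (S : Set G)).dist ((t^(l+1) * u) * 1)
                ((t^(l+1) * u) * (u⁻¹ * (t^(-(l+1)) * y))) =
                (cayley (S : Set G)).dist 1 (u⁻¹ * (t^(-(l+1)) * y)) := dist_mul S _ _ _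
            rw [mul_one, show (t^(l+1) * u) * (u⁻¹ * (t^(-(l+1)) * y)) = y by group] at h1
            omega
          have hpat := pat (u⁻¹ * (t^(-(l+1)) * y)) hdx
          rw [mul_inv_cancel_left] at hpat
          rw [show v * (u⁻¹ * (t^(-(l+1)) * y)) = t^(-l) * y by
            rw [← mul_assoc, ← ht_def, ← mul_assoc, show t * t^(-(l+1)) = t^(-l) by
              rw [show -l = 1 + -(l+1) by ring, zpow_add, zpow_one]]] at hpat
          exact hpat.symm
        rw [hstepeq]
        exact ih (l+1) (by omega) (by omega)
  -- the periodic configuration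
  refine ⟨fun x => σ (t^(-(ν x)) * x), ?_, t, ht1, ?_⟩
  · rw [hXdef]
    intro g i
    have hFne : (F i).Nonempty := by
      obtain ⟨x, _⟩ := hσ 1 i
      exact ⟨↑x, x.2⟩
    have himne : ((F i).image (fun x => ν (g * x))).Nonempty := hFne.image _
    set k₀ := ((F i).image (fun x => ν (g * x))).min' himne with hk₀def
    obtain ⟨x₀, hx₀m, hx₀ν⟩ := Finset.mem_image.mp (((F i).image _).min'_mem himne)
    have hk₀le : ∀ x : G, x ∈ F i → k₀ ≤ ν (g * x) := by
      intro x hx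
      exact Finset.min'_le _ _ (Finset.mem_image.mpr ⟨x, hx, rfl⟩)
    obtain ⟨xw, hxw⟩ := hσ (t^(-k₀) * g) i
    refine ⟨xw, ?_⟩
    have hdb : (cayley (S : Set G)).dist (g * x₀) (g * ↑xw) ≤ 2*r := by
      have h1 : (cayley (S : Set G)).dist (g * x₀) (g * ↑xw) =
          (cayley (S : Set G)).dist x₀ ↑xw := dist_mul S g x₀ ↑xw
      have h2 : (cayley (S : Set G)).dist x₀ (↑xw) ≤ (cayley (S : Set G)).dist x₀ 1 +
          (cayley (S : Set G)).dist 1 ↑xw := hc.dist_triangle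
      have h3 : (cayley (S : Set G)).dist x₀ 1 = (cayley (S : Set G)).dist 1 x₀ :=
        SimpleGraph.dist_comm
      have h4 := hr i x₀ hx₀m
      have h5 := hr i ↑xw xw.2
      omega
    have hkey := key (g * x₀) (g * ↑xw) hdb (ν (g * ↑xw) - k₀).toNat k₀
      (by rw [hx₀ν]) (by
        have := hk₀le ↑xw xw.2
        omega)
    rw [← mul_assoc] at hkey
    intro hfalse
    apply hxw
    rw [hkey]
    exact hfalse
  · intro x
    show σ (t^(-(ν (t * x))) * (t * x)) = σ (t^(-(ν x)) * x)
    rw [νt x, ← mul_assoc, show t^(-(ν x + 1)) * t = t^(-(ν x)) by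
      rw [← zpow_add_one]; congr 1; ring]

/-- if `G` is a finitely generated group with at least two ends, `A` is a finite
set and `X ⊆ A^G` is a nonempty subshift of finite type, then some `σ ∈ X` is fixed by some
`g ≠ 1`; in particular `G` has no strongly aperiodic SFT. -/
theorem stmt0 {G : Type*} [Group G] (S : Finset G)
    (hsym : ∀ s ∈ S, s⁻¹ ∈ S) (hgen : Subgroup.closure (S : Set G) = ⊤)
    (h2 : TwoEnds (S : Set G))
    {A : Type*} [Finite A] (X : Set (G → A)) (hX : IsSFT X) (hne : X.Nonempty) :
    (∃ σ ∈ X, ∃ g : G, g ≠ 1 ∧ ∀ x : G, σ (g * x) = σ x) ∧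
      ¬ HasStronglyAperiodicSFT G := by
  constructor
  · exact main_periodic S hsym hgen h2 X hX hne
  · rintro ⟨A', hfin, X', hSFT, hne', haper⟩
    obtain ⟨σ, hσ, g, hg1, hper⟩ := main_periodic S hsym hgen h2 X' hSFT hne'
    exact hg1 (haper σ hσ g hper)
end

section
/- Let G be a group with finite symmetric generating set S, and let B₀, B₁, B₂, B₃ be finite subsets of G each of whose induced subgraphs of Cay(G,S) is connected. If B₁ separates B₀ from B₂ and B₂ separates B₁ from B₃, then B₁ separates B₀ from B₃ and B₂ separates B₀ from B₃. -/
open scoped Pointwise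

/-- `x` and `y` are joined by a walk of `Γ` avoiding the vertex set `K`, i.e. they are in the
same connected component of the graph obtained from `Γ` by deleting the vertices of `K` and
all incident edges. -/
def ReachAvoid {V : Type*} (Γ : SimpleGraph V) (K : Set V) (x y : V) : Prop :=
  ∃ w : Γ.Walk x y, ∀ v ∈ w.support, v ∉ K

/-- `Separates S B₁ B₀ B₂` : `B₁` separates `B₀` from `B₂`, i.e. `B₀` and `B₂` lie in distinct
connected components of the graph obtained from the Cayley graph of `(G,S)` by deleting the
vertices of `B₁` and all incident edges. -/
def Separates {G : Type*} [Group G] (S : Set G) (B₁ B₀ B₂ : Set G) : Prop :=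
  Disjoint B₀ B₁ ∧ Disjoint B₂ B₁ ∧
    ∀ x ∈ B₀, ∀ y ∈ B₂, ¬ ReachAvoid (cayley S) B₁ x y

private lemma cayley_adj_mul {G : Type*} [Group G] (S : Set G) (a : G) {g g' : G}
    (h : (cayley S).Adj g g') : (cayley S).Adj (a * g) (a * g') := by
  simp only [cayley, SimpleGraph.fromRel_adj] at h ⊢
  refine ⟨fun he => h.1 (mul_left_cancel he), ?_⟩
  have e1 : (a * g)⁻¹ * (a * g') = g⁻¹ * g' := by group
  have e2 : (a * g')⁻¹ * (a * g) = g'⁻¹ * g := by group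
  rw [e1, e2]; exact h.2

private def cayleyMulHom {G : Type*} [Group G] (S : Set G) (a : G) :
    cayley S →g cayley S where
  toFun g := a * g
  map_rel' h := cayley_adj_mul S a h

private lemma cayley_reachable {G : Type*} [Group G] (S : Set G)
    (hgen : Subgroup.closure S = ⊤) (x y : G) : (cayley S).Reachable x y := by
  have key : ∀ g : G, (cayley S).Reachable 1 g := by
    intro g
    have hg : g ∈ Subgroup.closure S := hgen ▸ Subgroup.mem_top g
    induction hg using Subgroup.closure_induction with
    | mem s hs =>
      by_cases h1 : s = 1
      · subst h1; exact SimpleGraph.Reachable.refl 1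
      · refine SimpleGraph.Adj.reachable ?_
        simp only [cayley, SimpleGraph.fromRel_adj]
        exact ⟨fun he => h1 he.symm, Or.inl (by simpa using hs)⟩
    | one => exact SimpleGraph.Reachable.refl 1
    | mul a b _ _ iha ihb =>
      refine iha.trans ?_
      have h2 : (cayley S).Reachable (a * 1) (a * b) := ihb.map (cayleyMulHom S a)
      simpa using h2
    | inv a _ iha =>
      have h2 : (cayley S).Reachable (a⁻¹ * 1) (a⁻¹ * a) := iha.map (cayleyMulHom S a⁻¹)
      have h3 := h2.symm
      simp only [mul_one, inv_mul_cancel] at h3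
      exact h3
  exact (key x).symm.trans (key y)

private lemma walk_first_hit {V : Type*} {Γ : SimpleGraph V} (K : Set V) :
    ∀ {x z : V} (w : Γ.Walk x z), z ∈ K →
      ∃ y, y ∈ K ∧ ∃ w' : Γ.Walk x y, ∀ v ∈ w'.support, v ∈ K → v = y := by
  intro x z w
  induction w with
  | nil =>
    intro hx
    exact ⟨_, hx, SimpleGraph.Walk.nil, fun v hv _ => by simpa using hv⟩
  | @cons u v z h p ih =>
    intro hz
    by_cases hu : u ∈ K
    · exact ⟨u, hu, SimpleGraph.Walk.nil, fun t ht _ => by simpa using ht⟩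
    · obtain ⟨y, hy, w', hw'⟩ := ih hz
      refine ⟨y, hy, SimpleGraph.Walk.cons h w', ?_⟩
      intro t ht htK
      simp only [SimpleGraph.Walk.support_cons, List.mem_cons] at ht
      rcases ht with rfl | ht
      · exact absurd htK hu
      · exact hw' t ht htK

/-- if `B₁` separates `B₀` from `B₂` and `B₂` separates `B₁` from `B₃`, then both
`B₁` and `B₂` separate `B₀` from `B₃`. -/
theorem stmt6 {G : Type*} [Group G] (S : Finset G)
    (hsym : ∀ s ∈ S, s⁻¹ ∈ S) (hgen : Subgroup.closure (S : Set G) = ⊤)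
    (B₀ B₁ B₂ B₃ : Set G)
    (h0f : B₀.Finite) (h1f : B₁.Finite) (h2f : B₂.Finite) (h3f : B₃.Finite)
    (h0c : ((cayley (S : Set G)).induce B₀).Connected)
    (h1c : ((cayley (S : Set G)).induce B₁).Connected)
    (h2c : ((cayley (S : Set G)).induce B₂).Connected)
    (h3c : ((cayley (S : Set G)).induce B₃).Connected)
    (hsep₁ : Separates (S : Set G) B₁ B₀ B₂)
    (hsep₂ : Separates (S : Set G) B₂ B₁ B₃) :
    Separates (S : Set G) B₁ B₀ B₃ ∧ Separates (S : Set G) B₂ B₀ B₃ := by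
  classical
  obtain ⟨⟨b2, hb2⟩⟩ := h2c.nonempty
  obtain ⟨h01, h21, hsep₁3⟩ := hsep₁
  obtain ⟨h12, h32, hsep₂3⟩ := hsep₂
  -- derived disjointness
  have h02 : Disjoint B₀ B₂ := by
    rw [Set.disjoint_left]
    intro x hx0 hx2
    refine hsep₁3 x hx0 x hx2 ⟨SimpleGraph.Walk.nil, ?_⟩
    intro v hv
    simp only [SimpleGraph.Walk.support_nil, List.mem_singleton] at hv
    subst hv
    exact Set.disjoint_left.mp h01 hx0
  have h31 : Disjoint B₃ B₁ := by
    rw [Set.disjoint_left]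
    intro x hx3 hx1
    refine hsep₂3 x hx1 x hx3 ⟨SimpleGraph.Walk.nil, ?_⟩
    intro v hv
    simp only [SimpleGraph.Walk.support_nil, List.mem_singleton] at hv
    subst hv
    exact Set.disjoint_left.mp h12 hx1
  -- every point of B₀ reaches B₁ avoiding B₂
  have claimC : ∀ x ∈ B₀, ∃ b ∈ B₁, ReachAvoid (cayley (S : Set G)) B₂ x b := by
    intro x hx
    obtain ⟨w⟩ := cayley_reachable (S : Set G) hgen x b2
    obtain ⟨y, hy, w', hw'⟩ := walk_first_hit (B₁ ∪ B₂) w (Or.inr hb2)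
    rcases hy with hy1 | hy2
    · refine ⟨y, hy1, w', ?_⟩
      intro v hv hvB2
      have hvy : v = y := hw' v hv (Or.inr hvB2)
      exact Set.disjoint_left.mp h12 hy1 (hvy ▸ hvB2)
    · refine absurd (⟨w', ?_⟩ : ReachAvoid (cayley (S : Set G)) B₁ x y)
        (hsep₁3 x hx y hy2)
      intro v hv hvB1
      have hvy : v = y := hw' v hv (Or.inl hvB1)
      exact Set.disjoint_left.mp h21 hy2 (hvy ▸ hvB1)
  have sepB2 : Separates (S : Set G) B₂ B₀ B₃ := by
    refine ⟨h02, h32, ?_⟩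
    rintro x hx y hy ⟨w, hw⟩
    obtain ⟨b, hb, w', hw'⟩ := claimC x hx
    refine hsep₂3 b hb y hy ⟨w'.reverse.append w, ?_⟩
    intro v hv
    rw [SimpleGraph.Walk.mem_support_append_iff] at hv
    rcases hv with hv | hv
    · exact hw' v (by rwa [SimpleGraph.Walk.support_reverse, List.mem_reverse] at hv)
    · exact hw v hv
  have sepB1 : Separates (S : Set G) B₁ B₀ B₃ := by
    refine ⟨h01, h31, ?_⟩
    rintro x hx y hy ⟨w, hw⟩
    by_cases hmeet : ∃ z ∈ w.support, z ∈ B₂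
    · obtain ⟨z, hz, hzB2⟩ := hmeet
      refine hsep₁3 x hx z hzB2 ⟨w.takeUntil z hz, ?_⟩
      intro v hv
      exact hw v (SimpleGraph.Walk.support_takeUntil_subset w hz hv)
    · push_neg at hmeet
      exact sepB2.2.2 x hx y hy ⟨w, hmeet⟩
  exact ⟨sepB1, sepB2⟩
end

section
/- Let G be a finitely generated group with at least 2 ends, with fixed finite symmetric generating set S. Let n ∈ ℕ be such that there exists an n-axial element g_ax ∈ G, write B = B(n,1_G) and B² = B(2n,1_G), let g be a positive power of g_ax such that g^k·B² ∩ B² = ∅ for every integer k ≠ 0, and let m₁ < m₂ be integers. Then there exists a subset 𝔖 ⊆ G such that: (i) g^{k(m₂−m₁)}·𝔖 ∩ 𝔖 = ∅ for every integer k ≠ 0; (ii) for every h ∈ G there exists an integer k such that h ∈ g^{k(m₂−m₁)}·𝔖; (iii) for every h ∈ G there exists an integer k such that g^{k(m₂−m₁)}·h·B ⊆ 𝔖 ∪ g^{m₁}·B² ∪ g^{m₂}·B²; and (iv) g^{m₁}·B ⊆ 𝔖. -/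
open scoped Pointwise

/-- `g` is `n`-axial: for all integers `a < b < c`, the translate `g^b • B(n,1)` separates
`g^a • B(n,1)` from `g^c • B(n,1)`. -/
def IsAxial {G : Type*} [Group G] (S : Set G) (n : ℕ) (g : G) : Prop :=
  ∀ a b c : ℤ, a < b → b < c →
    Separates S (g ^ b • ball S n 1) (g ^ a • ball S n 1) (g ^ c • ball S n 1)

namespace Stmt8Work

variable {G : Type*} [Group G]

lemma cayley_adj_mul {S : Set G} (h : G) {a b : G} (hab : (cayley S).Adj a b) :
    (cayley S).Adj (h * a) (h * b) := by
  rw [cayley, SimpleGraph.fromRel_adj] at hab ⊢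
  obtain ⟨hne, hs⟩ := hab
  refine ⟨by simpa using hne, ?_⟩
  simpa [mul_inv_rev, mul_assoc] using hs

def mulHom (S : Set G) (h : G) : cayley S →g cayley S where
  toFun := fun x => h * x
  map_rel' := fun hab => cayley_adj_mul h hab

lemma reachAvoid_mul {S : Set G} (h : G) {K : Set G} {x y : G}
    (hr : ReachAvoid (cayley S) K x y) :
    ReachAvoid (cayley S) (h • K) (h * x) (h * y) := by
  obtain ⟨w, hw⟩ := hr
  refine ⟨w.map (mulHom S h), ?_⟩
  intro v hv
  change v ∈ (w.map (mulHom S h)).support at hv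
  rw [SimpleGraph.Walk.support_map, List.mem_map] at hv
  obtain ⟨u, hu, rfl⟩ := hv
  intro hmem
  have : (u : G) ∈ K := by
    have h2 := (Set.smul_mem_smul_set_iff (a := h) (s := K) (x := u)).mp ?_
    · exact h2
    · exact hmem
  exact hw u hu this

lemma cayley_reachable {S : Set G} (hgen : Subgroup.closure S = ⊤) (x : G) :
    (cayley S).Reachable 1 x := by
  have hx : x ∈ Subgroup.closure S := by rw [hgen]; trivial
  induction hx using Subgroup.closure_induction with
  | mem s hs =>
      by_cases h1 : s = 1
      · subst h1; rfl
      · refine SimpleGraph.Adj.reachable ?_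
        rw [cayley, SimpleGraph.fromRel_adj]
        exact ⟨fun h => h1 h.symm, Or.inl (by simpa using hs)⟩
  | one => rfl
  | mul a b _ _ ha hb =>
      have h1 : (cayley S).Reachable (a * 1) (a * b) :=
        SimpleGraph.Reachable.map (mulHom S a) hb
      rw [mul_one] at h1
      exact ha.trans h1
  | inv a _ ha =>
      have h1 : (cayley S).Reachable (a⁻¹ * 1) (a⁻¹ * a) :=
        SimpleGraph.Reachable.map (mulHom S a⁻¹) ha
      rw [mul_one, inv_mul_cancel] at h1
      exact h1.symm

lemma cayley_connected {S : Set G} (hgen : Subgroup.closure S = ⊤) :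
    (cayley S).Connected := by
  haveI : Nonempty G := ⟨1⟩
  exact ⟨fun a b => (cayley_reachable hgen a).symm.trans (cayley_reachable hgen b)⟩

lemma dist_mul_le {S : Set G} (hc : (cayley S).Connected) (h a b : G) :
    (cayley S).dist (h * a) (h * b) ≤ (cayley S).dist a b := by
  obtain ⟨w, hw⟩ := hc.exists_walk_length_eq_dist a b
  calc (cayley S).dist (h * a) (h * b) ≤ (w.map (mulHom S h)).length :=
        SimpleGraph.dist_le _
    _ = (cayley S).dist a b := by rw [SimpleGraph.Walk.length_map, hw]

lemma dist_mul {S : Set G} (hc : (cayley S).Connected) (h a b : G) :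
    (cayley S).dist (h * a) (h * b) = (cayley S).dist a b := by
  refine le_antisymm (dist_mul_le hc h a b) ?_
  have := dist_mul_le hc h⁻¹ (h * a) (h * b)
  simpa using this

lemma one_mem_ball {S : Set G} (n : ℕ) : (1 : G) ∈ ball S n 1 := by
  simp [ball, SimpleGraph.dist_self]

lemma mem_smul_ball_iff {S : Set G} (hc : (cayley S).Connected) {n : ℕ} {h y : G} :
    y ∈ h • ball S n 1 ↔ (cayley S).dist h y ≤ n := by
  rw [Set.mem_smul_set_iff_inv_smul_mem, smul_eq_mul]
  have h1 : (cayley S).dist 1 (h⁻¹ * y) = (cayley S).dist h y := by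
    have := dist_mul hc h 1 (h⁻¹ * y)
    simpa using this.symm
  rw [show ((h⁻¹ * y) ∈ ball S n 1) = ((cayley S).dist 1 (h⁻¹ * y) ≤ n) from rfl, h1]

lemma mem_smul_ball2 {S : Set G} (hc : (cayley S).Connected) {n : ℕ} {e z v : G}
    (hv : v ∈ e • ball S n 1) (hdist : (cayley S).dist v z ≤ n) :
    z ∈ e • ball S (2 * n) 1 := by
  rw [mem_smul_ball_iff hc] at hv ⊢
  have := hc.dist_triangle (u := e) (v := v) (w := z)
  omega

lemma dist_le_of_mem_support {S : Set G} {x z v : G} (w : (cayley S).Walk x z)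
    (hv : v ∈ w.support) : (cayley S).dist v z ≤ w.length := by
  classical
  exact le_trans (SimpleGraph.dist_le _) (SimpleGraph.Walk.length_dropUntil_le w hv)

lemma list_bound {α : Type*} (l : List α) (f : α → ℤ) : ∃ K : ℤ, ∀ v ∈ l, f v ≤ K := by
  induction l with
  | nil => exact ⟨0, by simp⟩
  | cons a t ih =>
      obtain ⟨K, hK⟩ := ih
      refine ⟨max (f a) K, ?_⟩
      intro v hv
      rcases List.mem_cons.mp hv with rfl | hv
      · exact le_max_left _ _
      · exact le_trans (hK v hv) (le_max_right _ _)

section Core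

variable (S : Set G) (n : ℕ) (g : G) (m₁ d : ℤ)

def cut (k : ℤ) : Set G := g ^ (m₁ + k * d) • ball S n 1

def LeftOf (k : ℤ) (x : G) : Prop :=
  ∀ c : ℤ, m₁ + k * d < c → ∀ y ∈ ball S n 1,
    ¬ ReachAvoid (cayley S) (cut S n g m₁ d k) x (g ^ c * y)

variable {S n g m₁ d}

lemma cut_disjoint (hd : 0 < d)
    (hdisj : ∀ k : ℤ, k ≠ 0 → Disjoint (g ^ k • ball S (2 * n) 1) (ball S (2 * n) 1))
    {j j' : ℤ} {v : G} (hjj : j ≠ j') (h1 : v ∈ cut S n g m₁ d j)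
    (h2 : v ∈ cut S n g m₁ d j') : False := by
  obtain ⟨b, hb, hbe0⟩ := h1
  obtain ⟨b', hb', hbe0'⟩ := h2
  have hbe : g ^ (m₁ + j * d) * b = v := hbe0
  have hbe' : g ^ (m₁ + j' * d) * b' = v := hbe0'
  have hBsub : ball S n 1 ⊆ ball S (2 * n) 1 := fun x hx => by
    simp only [ball, Set.mem_setOf_eq] at hx ⊢; omega
  have hk0 : (m₁ + j * d) - (m₁ + j' * d) ≠ 0 := by
    have he : (m₁ + j * d) - (m₁ + j' * d) = (j - j') * d := by ring
    rw [he]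
    exact mul_ne_zero (sub_ne_zero.mpr hjj) (ne_of_gt hd)
  have key : g ^ ((m₁ + j * d) - (m₁ + j' * d)) * b = b' := by
    have h3 : g ^ ((m₁ + j * d) - (m₁ + j' * d)) * b
        = g ^ (-(m₁ + j' * d)) * (g ^ (m₁ + j * d) * b) := by
      rw [← mul_assoc, ← zpow_add]
      congr 2
      ring
    rw [h3, hbe, ← hbe', ← mul_assoc, ← zpow_add, neg_add_cancel, zpow_zero, one_mul]
  have hmem : b' ∈ g ^ ((m₁ + j * d) - (m₁ + j' * d)) • ball S (2 * n) 1 :=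
    ⟨b, hBsub hb, key⟩
  exact Set.disjoint_left.mp (hdisj _ hk0) hmem (hBsub hb')

lemma leftOf_translate (j : ℤ) {k : ℤ} {x : G} (hL : LeftOf S n g m₁ d k x) :
    LeftOf S n g m₁ d (k + j) (g ^ (j * d) * x) := by
  intro c hc y hy hreach
  have hr2 := reachAvoid_mul (g ^ (-(j * d))) hreach
  have hset : g ^ (-(j * d)) • cut S n g m₁ d (k + j) = cut S n g m₁ d k := by
    unfold cut
    rw [smul_smul, ← zpow_add]
    congr 2
    ring
  have hx' : g ^ (-(j * d)) * (g ^ (j * d) * x) = x := by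
    rw [← mul_assoc, ← zpow_add, neg_add_cancel, zpow_zero, one_mul]
  have hy' : g ^ (-(j * d)) * (g ^ c * y) = g ^ (c - j * d) * y := by
    rw [← mul_assoc, ← zpow_add]
    congr 2
    ring
  rw [hset, hx', hy'] at hr2
  have hcc : m₁ + k * d < c - j * d := by
    have h2 : m₁ + (k + j) * d = m₁ + k * d + j * d := by ring
    rw [h2] at hc
    linarith
  exact hL _ hcc y hy hr2

lemma leftOf_mono (hax : IsAxial S n g) (hd : 0 < d) {k k' : ℤ} {x : G}
    (hL : LeftOf S n g m₁ d k x) (hkk : k < k') : LeftOf S n g m₁ d k' x := by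
  intro c hc y hy hreach
  obtain ⟨w, hw⟩ := hreach
  have hbb : m₁ + k * d < m₁ + k' * d :=
    add_lt_add_right (mul_lt_mul_of_pos_right hkk hd) m₁
  by_cases hcase : ∀ v ∈ w.support, v ∉ cut S n g m₁ d k
  · exact hL c (lt_trans hbb hc) y hy ⟨w, hcase⟩
  · push_neg at hcase
    obtain ⟨v, hv, hvcut⟩ := hcase
    classical
    have hsep := hax (m₁ + k * d) (m₁ + k' * d) c hbb hc
    refine hsep.2.2 v hvcut (g ^ c * y) ⟨y, hy, rfl⟩ ?_
    exact ⟨w.dropUntil v hv, fun u hu => hw u (SimpleGraph.Walk.support_dropUntil_subset w hv hu)⟩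

lemma exists_leftOf (hconn : (cayley S).Connected) (hax : IsAxial S n g) (hd : 0 < d)
    (hdisj : ∀ k : ℤ, k ≠ 0 → Disjoint (g ^ k • ball S (2 * n) 1) (ball S (2 * n) 1))
    (x : G) : ∃ K : ℤ, LeftOf S n g m₁ d K x := by
  classical
  obtain ⟨P, -⟩ := hconn.exists_walk_length_eq_dist 1 x
  have hbound : ∃ K : ℤ, ∀ v ∈ P.support, ∀ k, v ∈ cut S n g m₁ d k → k < K := by
    obtain ⟨K, hK⟩ := list_bound P.support
      (fun v => if h : ∃ k, v ∈ cut S n g m₁ d k then h.choose else 0)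
    refine ⟨K + 1, fun v hv k hk => ?_⟩
    have hex : ∃ k', v ∈ cut S n g m₁ d k' := ⟨k, hk⟩
    have heq : k = hex.choose := by
      by_contra hne
      exact cut_disjoint hd hdisj hne hk hex.choose_spec
    have h5 := hK v hv
    rw [dif_pos hex] at h5
    omega
  obtain ⟨K0, hK0⟩ := hbound
  set K := max K0 (max 0 (1 - m₁)) with hKdef
  have hKpos : 0 < m₁ + K * d := by
    have h1 : (0:ℤ) ≤ K := le_trans (le_max_left 0 (1 - m₁)) (le_max_right K0 _)
    have h2 : 1 - m₁ ≤ K := le_trans (le_max_right 0 (1 - m₁)) (le_max_right K0 _)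
    have h3 : K ≤ K * d := le_mul_of_one_le_right h1 hd
    linarith
  refine ⟨K, ?_⟩
  intro c hc y hy hreach
  obtain ⟨w, hw⟩ := hreach
  have havoid : ∀ v ∈ (P.append w).support, v ∉ cut S n g m₁ d K := by
    intro v hv
    rcases (SimpleGraph.Walk.mem_support_append_iff _ _).mp hv with hv | hv
    · intro hcut
      have := hK0 v hv K hcut
      have hK0le : K0 ≤ K := le_max_left _ _
      omega
    · exact hw v hv
  have h1mem : (1 : G) ∈ g ^ (0:ℤ) • ball S n 1 := ⟨1, one_mem_ball n, by simp⟩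
  exact (hax 0 (m₁ + K * d) c hKpos hc).2.2 1 h1mem (g ^ c * y) ⟨y, hy, rfl⟩
    ⟨P.append w, havoid⟩

lemma exists_not_leftOf (hconn : (cayley S).Connected) (hd : 0 < d)
    (hdisj : ∀ k : ℤ, k ≠ 0 → Disjoint (g ^ k • ball S (2 * n) 1) (ball S (2 * n) 1))
    (x : G) : ∃ K : ℤ, ¬ LeftOf S n g m₁ d K x := by
  classical
  obtain ⟨P, -⟩ := hconn.exists_walk_length_eq_dist x 1
  have hbound : ∃ L : ℤ, ∀ v ∈ P.support, ∀ k, v ∈ cut S n g m₁ d k → L < k := by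
    obtain ⟨K, hK⟩ := list_bound P.support
      (fun v => if h : ∃ k, v ∈ cut S n g m₁ d k then -h.choose else 0)
    refine ⟨-K - 1, fun v hv k hk => ?_⟩
    have hex : ∃ k', v ∈ cut S n g m₁ d k' := ⟨k, hk⟩
    have heq : k = hex.choose := by
      by_contra hne
      exact cut_disjoint hd hdisj hne hk hex.choose_spec
    have h5 := hK v hv
    rw [dif_pos hex] at h5
    omega
  obtain ⟨L, hL⟩ := hbound
  set K := min L (min 0 (-m₁ - 1)) with hKdef
  have hKneg : m₁ + K * d < 0 := by
    have h1 : K ≤ 0 := le_trans (min_le_right _ _) (min_le_left _ _)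
    have h2 : K ≤ -m₁ - 1 := le_trans (min_le_right _ _) (min_le_right _ _)
    have h3 : K * d ≤ K := by nlinarith
    linarith
  refine ⟨K, fun hLf => ?_⟩
  have havoid : ∀ v ∈ P.support, v ∉ cut S n g m₁ d K := by
    intro v hv hcut
    have h4 := hL v hv K hcut
    have h5 : K ≤ L := min_le_left _ _
    omega
  refine hLf 0 hKneg 1 (one_mem_ball n)
    ⟨P.copy rfl (by simp : (1:G) = g ^ (0:ℤ) * 1), ?_⟩
  intro v hv
  rw [SimpleGraph.Walk.support_copy] at hv
  exact havoid v hv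

lemma leftOf_cut (hd : 0 < d)
    (hdisj : ∀ k : ℤ, k ≠ 0 → Disjoint (g ^ k • ball S (2 * n) 1) (ball S (2 * n) 1))
    {j : ℤ} {x : G} (hx : x ∈ cut S n g m₁ d j) :
    LeftOf S n g m₁ d j x ∧ ¬ LeftOf S n g m₁ d (j - 1) x := by
  constructor
  · intro c hc y hy hreach
    obtain ⟨w, hw⟩ := hreach
    exact hw x w.start_mem_support hx
  · intro hL
    have hx0 := hx
    obtain ⟨b, hb, hbe0⟩ := hx
    have hbe : g ^ (m₁ + j * d) * b = x := hbe0
    have hlt : m₁ + (j - 1) * d < m₁ + j * d := by nlinarith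
    refine hL (m₁ + j * d) hlt b hb
      ⟨(SimpleGraph.Walk.nil : (cayley S).Walk x x).copy rfl hbe.symm, ?_⟩
    intro v hv
    rw [SimpleGraph.Walk.support_copy] at hv
    simp only [SimpleGraph.Walk.support_nil, List.mem_singleton] at hv
    subst hv
    intro hcut
    exact cut_disjoint hd hdisj (by omega : j ≠ j - 1) hx0 hcut

end Core

end Stmt8Work

open Stmt8Work

/-- existence of a fundamental-domain-like set `𝔖` for the action of
`⟨g^(m₂-m₁)⟩`, where `g` is a suitable positive power of an `n`-axial element.
Here `B = ball S n 1` and `B² = ball S (2n) 1`. -/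
theorem stmt8 {G : Type*} [Group G] (S : Finset G)
    (hsym : ∀ s ∈ S, s⁻¹ ∈ S) (hgen : Subgroup.closure (S : Set G) = ⊤)
    (h2 : TwoEnds (S : Set G)) (n : ℕ) (gax : G) (hax : IsAxial (S : Set G) n gax)
    (g : G) (hgpow : ∃ p : ℕ, 0 < p ∧ g = gax ^ p)
    (hdisj : ∀ k : ℤ, k ≠ 0 →
      Disjoint (g ^ k • ball (S : Set G) (2 * n) 1) (ball (S : Set G) (2 * n) 1))
    (m₁ m₂ : ℤ) (hm : m₁ < m₂) :
    ∃ 𝔖 : Set G,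
      (∀ k : ℤ, k ≠ 0 → Disjoint (g ^ (k * (m₂ - m₁)) • 𝔖) 𝔖) ∧
      (∀ h : G, ∃ k : ℤ, h ∈ g ^ (k * (m₂ - m₁)) • 𝔖) ∧
      (∀ h : G, ∃ k : ℤ, (g ^ (k * (m₂ - m₁)) * h) • ball (S : Set G) n 1 ⊆
        𝔖 ∪ g ^ m₁ • ball (S : Set G) (2 * n) 1 ∪ g ^ m₂ • ball (S : Set G) (2 * n) 1) ∧
      g ^ m₁ • ball (S : Set G) n 1 ⊆ 𝔖 := by
  classical
  clear h2 hsym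
  have hconn : (cayley (S : Set G)).Connected := cayley_connected hgen
  have haxg : IsAxial (S : Set G) n g := by
    obtain ⟨p, hp, hg⟩ := hgpow
    intro a b c hab hbc
    have hp' : (0:ℤ) < (p:ℤ) := by exact_mod_cast hp
    have key : ∀ e : ℤ, g ^ e = gax ^ ((p:ℤ) * e) := by
      intro e
      rw [hg, ← zpow_natCast, ← zpow_mul]
    rw [key a, key b, key c]
    exact hax _ _ _ (mul_lt_mul_of_pos_left hab hp') (mul_lt_mul_of_pos_left hbc hp')
  set d := m₂ - m₁ with hd_def
  have hd : 0 < d := sub_pos.mpr hm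
  -- least level function
  have hleast : ∀ x : G, ∃ k : ℤ, LeftOf (S : Set G) n g m₁ d k x ∧
      ∀ j, j < k → ¬ LeftOf (S : Set G) n g m₁ d j x := by
    intro x
    obtain ⟨K1, hK1⟩ := exists_leftOf hconn haxg hd hdisj x
    obtain ⟨K2, hK2⟩ := exists_not_leftOf hconn hd hdisj x
    have hbdd : ∃ b : ℤ, ∀ z : ℤ, LeftOf (S : Set G) n g m₁ d z x → b ≤ z := by
      refine ⟨K2 + 1, fun z hz => ?_⟩
      by_contra hlt
      push_neg at hlt
      rcases eq_or_lt_of_le (by omega : z ≤ K2) with rfl | hzz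
      · exact hK2 hz
      · exact hK2 (leftOf_mono haxg hd hz hzz)
    obtain ⟨lb, hlb1, hlb2⟩ := Int.exists_least_of_bdd hbdd ⟨K1, hK1⟩
    exact ⟨lb, hlb1, fun j hj hLj => absurd (hlb2 j hLj) (by omega)⟩
  choose μ hμ1 hμ2 using hleast
  have huniq : ∀ (x : G) (k : ℤ), LeftOf (S : Set G) n g m₁ d k x →
      ¬ LeftOf (S : Set G) n g m₁ d (k - 1) x → μ x = k := by
    intro x k hk hk1
    rcases lt_trichotomy (μ x) k with h | h | h
    · exfalso
      apply hk1
      rcases eq_or_lt_of_le (by omega : μ x ≤ k - 1) with he | hlt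
      · rw [← he]; exact hμ1 x
      · exact leftOf_mono haxg hd (hμ1 x) hlt
    · exact h
    · exact absurd hk (hμ2 x k h)
  have hcutμ : ∀ (x : G) (j : ℤ), x ∈ cut (S : Set G) n g m₁ d j → μ x = j := by
    intro x j hx
    obtain ⟨h1, h2⟩ := leftOf_cut hd hdisj hx
    exact huniq x j h1 h2
  have htransμ : ∀ (j : ℤ) (x : G), μ (g ^ (j * d) * x) = μ x + j := by
    intro j x
    apply huniq
    · exact leftOf_translate j (hμ1 x)
    · intro hcon
      have h2 := leftOf_translate (-j) hcon
      have hx' : g ^ (-j * d) * (g ^ (j * d) * x) = x := by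
        rw [← mul_assoc, ← zpow_add, show -j * d + j * d = 0 by ring, zpow_zero, one_mul]
      rw [hx'] at h2
      have hidx : μ x + j - 1 + -j = μ x - 1 := by ring
      rw [hidx] at h2
      exact hμ2 x (μ x - 1) (by omega) h2
  have hcutmem : ∀ (j i : ℤ) (x : G),
      x ∈ cut (S : Set G) n g m₁ d i ↔ g ^ (j * d) * x ∈ cut (S : Set G) n g m₁ d (i + j) := by
    intro j i x
    constructor
    · rintro ⟨b, hb, rfl⟩
      refine ⟨b, hb, ?_⟩
      show g ^ (m₁ + (i + j) * d) * b = g ^ (j * d) * (g ^ (m₁ + i * d) • b)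
      rw [smul_eq_mul, ← mul_assoc, ← zpow_add,
        show j * d + (m₁ + i * d) = m₁ + (i + j) * d by ring]
    · rintro ⟨b, hb, hbe0⟩
      refine ⟨b, hb, ?_⟩
      have hbe : g ^ (m₁ + (i + j) * d) * b = g ^ (j * d) * x := hbe0
      show g ^ (m₁ + i * d) * b = x
      have h6 := congrArg (fun z => g ^ (-(j * d)) * z) hbe
      simp only [← mul_assoc, ← zpow_add] at h6
      rw [show -(j * d) + (m₁ + (i + j) * d) = m₁ + i * d by ring,
        show -(j * d) + j * d = 0 by ring, zpow_zero, one_mul] at h6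
      exact h6
  set ψ : G → ℤ :=
    fun x => if ∃ i : ℤ, x ∈ cut (S : Set G) n g m₁ d i then μ x else μ x - 1 with hψdef
  have hψcut : ∀ (x : G), (∃ i : ℤ, x ∈ cut (S : Set G) n g m₁ d i) → ψ x = μ x := by
    intro x hex
    rw [hψdef]
    simp only [if_pos hex]
  have hψnocut : ∀ (x : G), ¬ (∃ i : ℤ, x ∈ cut (S : Set G) n g m₁ d i) → ψ x = μ x - 1 := by
    intro x hex
    rw [hψdef]
    simp only [if_neg hex]
  have hψtrans : ∀ (j : ℤ) (x : G), ψ (g ^ (j * d) * x) = ψ x + j := by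
    intro j x
    have hiff : (∃ i : ℤ, g ^ (j * d) * x ∈ cut (S : Set G) n g m₁ d i) ↔
        (∃ i : ℤ, x ∈ cut (S : Set G) n g m₁ d i) := by
      constructor
      · rintro ⟨i, hi⟩
        refine ⟨i - j, (hcutmem j (i - j) x).mpr ?_⟩
        rw [show i - j + j = i by ring]
        exact hi
      · rintro ⟨i, hi⟩
        exact ⟨i + j, (hcutmem j i x).mp hi⟩
    by_cases hex : ∃ i : ℤ, x ∈ cut (S : Set G) n g m₁ d i
    · rw [hψcut _ (hiff.mpr hex), hψcut _ hex, htransμ]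
    · rw [hψnocut _ (fun hh => hex (hiff.mp hh)), hψnocut _ hex, htransμ]
      ring
  refine ⟨{x : G | ψ x = 0}, ?_, ?_, ?_, ?_⟩
  · -- (i)
    intro k hk
    rw [Set.disjoint_left]
    rintro z ⟨s, hs, rfl⟩ hz2
    have hs0 : ψ s = 0 := hs
    have hz0 : ψ (g ^ (k * d) * s) = 0 := hz2
    rw [hψtrans k s, hs0] at hz0
    omega
  · -- (ii)
    intro h
    refine ⟨ψ h, g ^ (-ψ h * d) * h, ?_, ?_⟩
    · show ψ (g ^ (-ψ h * d) * h) = 0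
      rw [hψtrans (-ψ h) h]
      omega
    · show g ^ (ψ h * d) * (g ^ (-ψ h * d) * h) = h
      rw [← mul_assoc, ← zpow_add, show ψ h * d + -ψ h * d = 0 by ring, zpow_zero, one_mul]
  · -- (iii)
    intro h
    refine ⟨-ψ h, ?_⟩
    set x := g ^ (-ψ h * d) * h with hxdef
    have hψx : ψ x = 0 := by
      rw [hxdef, hψtrans (-ψ h) h]
      omega
    intro z hz
    rw [mem_smul_ball_iff hconn] at hz
    by_cases hz1 : z ∈ g ^ m₁ • ball (S : Set G) (2 * n) 1
    · exact Or.inl (Or.inr hz1)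
    by_cases hz2 : z ∈ g ^ m₂ • ball (S : Set G) (2 * n) 1
    · exact Or.inr hz2
    refine Or.inl (Or.inl ?_)
    obtain ⟨w, hwlen⟩ := hconn.exists_walk_length_eq_dist x z
    have hwn : w.length ≤ n := by rw [hwlen]; exact hz
    have havoid0 : ∀ v ∈ w.support, v ∉ cut (S : Set G) n g m₁ d 0 := by
      intro v hv hvc
      apply hz1
      have hdistv : (cayley (S : Set G)).dist v z ≤ n :=
        le_trans (dist_le_of_mem_support w hv) hwn
      have hv' : v ∈ g ^ m₁ • ball (S : Set G) n 1 := by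
        have hvc' : v ∈ g ^ (m₁ + 0 * d) • ball (S : Set G) n 1 := hvc
        rwa [show m₁ + 0 * d = m₁ by ring] at hvc'
      exact mem_smul_ball2 hconn hv' hdistv
    have havoid1 : ∀ v ∈ w.support, v ∉ cut (S : Set G) n g m₁ d 1 := by
      intro v hv hvc
      apply hz2
      have hdistv : (cayley (S : Set G)).dist v z ≤ n :=
        le_trans (dist_le_of_mem_support w hv) hwn
      have hv' : v ∈ g ^ m₂ • ball (S : Set G) n 1 := by
        have hvc' : v ∈ g ^ (m₁ + 1 * d) • ball (S : Set G) n 1 := hvc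
        rwa [show m₁ + 1 * d = m₂ by rw [hd_def]; ring] at hvc'
      exact mem_smul_ball2 hconn hv' hdistv
    have hx0 : x ∉ cut (S : Set G) n g m₁ d 0 := havoid0 x w.start_mem_support
    have hx1 : x ∉ cut (S : Set G) n g m₁ d 1 := havoid1 x w.start_mem_support
    have hxno : ¬ ∃ i : ℤ, x ∈ cut (S : Set G) n g m₁ d i := by
      rintro ⟨i, hi⟩
      have hμx : μ x = i := hcutμ x i hi
      have hpsix : ψ x = μ x := hψcut x ⟨i, hi⟩
      rw [hψx, hμx] at hpsix
      rw [← hpsix] at hi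
      exact hx0 hi
    have hμx1 : μ x = 1 := by
      have := hψnocut x hxno
      omega
    have hLx : LeftOf (S : Set G) n g m₁ d 1 x := by rw [← hμx1]; exact hμ1 x
    have hnLx : ¬ LeftOf (S : Set G) n g m₁ d 0 x := hμ2 x 0 (by omega)
    have hLz : LeftOf (S : Set G) n g m₁ d 1 z := by
      intro c hcc y hy hreach
      obtain ⟨w2, hw2⟩ := hreach
      refine hLx c hcc y hy ⟨w.append w2, ?_⟩
      intro v hv
      rcases (SimpleGraph.Walk.mem_support_append_iff _ _).mp hv with hv | hv
      · exact havoid1 v hv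
      · exact hw2 v hv
    have hnLz : ¬ LeftOf (S : Set G) n g m₁ d 0 z := by
      intro hLz0
      apply hnLx
      intro c hcc y hy hreach
      obtain ⟨w3, hw3⟩ := hreach
      refine hLz0 c hcc y hy ⟨w.reverse.append w3, ?_⟩
      intro v hv
      rcases (SimpleGraph.Walk.mem_support_append_iff _ _).mp hv with hv | hv
      · refine havoid0 v ?_
        rwa [SimpleGraph.Walk.support_reverse, List.mem_reverse] at hv
      · exact hw3 v hv
    have hμz : μ z = 1 := by
      refine huniq z 1 hLz ?_
      rw [show (1:ℤ) - 1 = 0 by ring]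
      exact hnLz
    have hzno : ¬ ∃ i : ℤ, z ∈ cut (S : Set G) n g m₁ d i := by
      rintro ⟨i, hi⟩
      have h7 : μ z = i := hcutμ z i hi
      rw [hμz] at h7
      rw [← h7] at hi
      exact havoid1 z w.end_mem_support hi
    show ψ z = 0
    have := hψnocut z hzno
    omega
  · -- (iv)
    intro x hx
    show ψ x = 0
    have hx0 : x ∈ cut (S : Set G) n g m₁ d 0 := by
      show x ∈ g ^ (m₁ + 0 * d) • ball (S : Set G) n 1
      rwa [show m₁ + 0 * d = m₁ by ring]
    rw [hψcut x ⟨0, hx0⟩, hcutμ x 0 hx0]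
end

section
/- Let G be a group finitely presented over its finite symmetric generating set S by relators of length at most K_G, and let H be a group with finite symmetric generating set T. For any σ ∈ Y_n, any g ∈ G, and any two words w, w′ over S representing the same element of G, one has ∫_{g·w} σ = ∫_{g·w′} σ; that is, ∫_{g·w} σ depends only on g and the element of G represented by w. -/
/-- `f : G → H` is `n`-Lipschitz for the word metrics associated to `S` and `T`. -/
def IsLip {G H : Type*} [Group G] [Group H] (S : Set G) (T : Set H)
    (n : ℕ) (f : G → H) : Prop :=
  ∀ x y : G, (cayley T).dist (f x) (f y) ≤ n * (cayley S).dist x y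

/-- The product in `G` of (the letters of) a word over `S`. -/
def wordProd {G : Type*} [Group G] (S : Finset G) (w : List ↥S) : G :=
  (w.map (fun s => (s : G))).prod

/-- The integral `∫_{g·w} σ` of a configuration `σ : G → (S → H)` along the word `w` based at
`g` : the telescoping product `σ(g)(s₀)·σ(gs₀)(s₁)⋯σ(gs₀⋯s_{k-1})(s_k)`. -/
def sint {G H : Type*} [Group G] [Group H] {S : Finset G}
    (σ : G → ↥S → H) : G → List ↥S → H
  | _, [] => 1
  | g, s :: w => σ g s * sint σ (g * (s : G)) w

/-- An elementary homotopy move between words over `S`: replace a subword `v` of length at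
most `K` by a word `v'` of length at most `K` representing the same element of `G`. -/
def ElemMove {G : Type*} [Group G] (S : Finset G) (K : ℕ) (w₁ w₂ : List ↥S) : Prop :=
  ∃ u v v' x : List ↥S, w₁ = u ++ v ++ x ∧ w₂ = u ++ v' ++ x ∧
    v.length ≤ K ∧ v'.length ≤ K ∧ wordProd S v = wordProd S v'

/-- `G` is presented over the (symmetric) generating set `S` by relators of length at most
`K`: any two words over `S` representing the same element of `G` are connected by a finite
sequence of elementary moves of size at most `K`. -/
def PresentedBy {G : Type*} [Group G] (S : Finset G) (K : ℕ) : Prop :=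
  ∀ w w' : List ↥S, wordProd S w = wordProd S w' →
    Relation.ReflTransGen (ElemMove S K) w w'

/-- Membership in `Y_n` (relative to relator bound `K`): `σ ∈ (B_H(n,1)^S)^G` is such that
for every `g ∈ G` and every pair of words `w₁, w₂` over `S` of length at most `K`
representing the same element of `G`, `∫_{g·w₁} σ = ∫_{g·w₂} σ`. -/
def memY {G H : Type*} [Group G] [Group H] (S : Finset G) (T : Finset H) (n K : ℕ)
    (σ : G → ↥S → ↥(ball (T : Set H) n 1)) : Prop :=
  ∀ (g : G) (w₁ w₂ : List ↥S), w₁.length ≤ K → w₂.length ≤ K →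
    wordProd S w₁ = wordProd S w₂ →
    sint (fun g s => ((σ g s : H))) g w₁ = sint (fun g s => ((σ g s : H))) g w₂


lemma sint_append {G H : Type*} [Group G] [Group H] {S : Finset G}
    (σ : G → ↥S → H) (g : G) (u v : List ↥S) :
    sint σ g (u ++ v) = sint σ g u * sint σ (g * wordProd S u) v := by
  induction u generalizing g with
  | nil => simp [sint, wordProd]
  | cons a u ih =>
    simp only [List.cons_append, sint, List.append_eq]
    rw [ih, show wordProd S (a :: u) = ↑a * wordProd S u by simp [wordProd], ← mul_assoc g,
      mul_assoc, mul_assoc]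

lemma wordProd_append {G : Type*} [Group G] {S : Finset G} (u v : List ↥S) :
    wordProd S (u ++ v) = wordProd S u * wordProd S v := by
  simp [wordProd]

/-- if `G` is presented over `S` by relators of length at most `K_G`, then for
`σ ∈ Y_n`, `∫_{g·w} σ` depends only on `g` and the element of `G` represented by `w`. -/
theorem stmt12 {G H : Type*} [Group G] [Group H] (S : Finset G) (T : Finset H)
    (hSsym : ∀ s ∈ S, s⁻¹ ∈ S) (hSgen : Subgroup.closure (S : Set G) = ⊤)
    (hTsym : ∀ t ∈ T, t⁻¹ ∈ T) (hTgen : Subgroup.closure (T : Set H) = ⊤)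
    (K n : ℕ) (hpres : PresentedBy S K)
    (σ : G → ↥S → ↥(ball (T : Set H) n 1)) (hσ : memY S T n K σ)
    (g : G) (w w' : List ↥S) (hww' : wordProd S w = wordProd S w') :
    sint (fun g s => ((σ g s : H))) g w = sint (fun g s => ((σ g s : H))) g w' := by
  have key : ∀ w₁ w₂, ElemMove S K w₁ w₂ → ∀ g,
      sint (fun g s => ((σ g s : H))) g w₁ = sint (fun g s => ((σ g s : H))) g w₂ := by
    rintro w₁ w₂ ⟨u, v, v', x, rfl, rfl, hv, hv', hvv'⟩ g
    simp only [sint_append, wordProd_append]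
    rw [hσ (g * wordProd S u) v v' hv hv' hvv', hvv']
  have h := hpres w w' hww'
  clear hww'
  induction h with
  | refl => rfl
  | tail _ h ih => exact ih.trans (key _ _ h g)
end

section
/- Let G be a group finitely presented over its finite symmetric generating set S by relators of length at most K_G, and let H be a group with finite symmetric generating set T. For every σ ∈ Y_n, the function f : G → H defined by f(g) = ∫_{1_G·w} σ for any word w over S representing g is well-defined, is n-Lipschitz for the word metrics, satisfies f(1_G) = 1_H, and satisfies df = σ. Consequently Y_n = {df : f ∈ Lip_n(G,H)}. -/
namespace Stmt13Aux

variable {G H : Type*} [Group G] [Group H]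

lemma wordProd_nil (S : Finset G) : wordProd S ([] : List ↥S) = 1 := rfl

lemma wordProd_cons (S : Finset G) (s : ↥S) (w : List ↥S) :
    wordProd S (s :: w) = (s : G) * wordProd S w := by simp [wordProd]

lemma wordProd_append (S : Finset G) (w₁ w₂ : List ↥S) :
    wordProd S (w₁ ++ w₂) = wordProd S w₁ * wordProd S w₂ := by simp [wordProd]

lemma sint_append {S : Finset G} (σ : G → ↥S → H) (g : G) (w₁ w₂ : List ↥S) :
    sint σ g (w₁ ++ w₂) = sint σ g w₁ * sint σ (g * wordProd S w₁) w₂ := by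
  induction w₁ generalizing g with
  | nil => simp [sint, wordProd_nil]
  | cons s w ih => simp [sint, ih, wordProd_cons, mul_assoc]

lemma wordProd_invRev (S : Finset G) (hSsym : ∀ s ∈ S, s⁻¹ ∈ S) (w : List ↥S) :
    wordProd S ((w.map (fun s : ↥S => (⟨(↑s)⁻¹, hSsym _ s.2⟩ : ↥S))).reverse)
      = (wordProd S w)⁻¹ := by
  induction w with
  | nil => simp [wordProd_nil]
  | cons s w ihw =>
    simp only [List.map_cons, List.reverse_cons, wordProd_append, wordProd_cons,
      wordProd_nil, ihw]
    simp [mul_inv_rev]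

lemma exists_word (S : Finset G) (hSsym : ∀ s ∈ S, s⁻¹ ∈ S)
    (hSgen : Subgroup.closure (S : Set G) = ⊤) (g : G) :
    ∃ w : List ↥S, wordProd S w = g := by
  have hg : g ∈ Subgroup.closure (S : Set G) := hSgen ▸ Subgroup.mem_top g
  induction hg using Subgroup.closure_induction with
  | mem x hx => exact ⟨[⟨x, hx⟩], by simp [wordProd]⟩
  | one => exact ⟨[], rfl⟩
  | mul x y _ _ ihx ihy =>
    obtain ⟨w₁, h₁⟩ := ihx
    obtain ⟨w₂, h₂⟩ := ihy
    exact ⟨w₁ ++ w₂, by rw [wordProd_append, h₁, h₂]⟩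
  | inv x _ ih =>
    obtain ⟨w, hw⟩ := ih
    exact ⟨(w.map (fun s : ↥S => (⟨(↑s)⁻¹, hSsym _ s.2⟩ : ↥S))).reverse,
      by rw [wordProd_invRev S hSsym, hw]⟩

def mulLeftIso (T : Set H) (a : H) : cayley T ≃g cayley T where
  toFun := fun x => a * x
  invFun := fun x => a⁻¹ * x
  left_inv := fun x => by simp
  right_inv := fun x => by simp
  map_rel_iff' := by
    intro x y
    simp [cayley, SimpleGraph.fromRel_adj, mul_assoc, mul_inv_rev]

@[simp] lemma mulLeftIso_apply (T : Set H) (a x : H) : (mulLeftIso T a) x = a * x := rfl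

@[simp] lemma mulLeftIso_toHom_apply (T : Set H) (a x : H) :
    (mulLeftIso T a).toHom x = a * x := rfl

lemma not_reachable_mul_left {T : Set H} {a x y : H}
    (h : ¬ (cayley T).Reachable x y) : ¬ (cayley T).Reachable (a * x) (a * y) := by
  intro hr
  apply h
  have := hr.map (mulLeftIso T a⁻¹).toHom
  simpa using this

lemma dist_mul_left_le (T : Set H) (a x y : H) :
    (cayley T).dist (a * x) (a * y) ≤ (cayley T).dist x y := by
  by_cases hr : (cayley T).Reachable x y
  · obtain ⟨p, hp⟩ := hr.exists_walk_length_eq_dist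
    calc (cayley T).dist (a * x) (a * y) ≤ (p.map (mulLeftIso T a).toHom).length :=
          SimpleGraph.dist_le _
      _ = p.length := SimpleGraph.Walk.length_map _ _
      _ = (cayley T).dist x y := hp
  · rw [SimpleGraph.dist_eq_zero_of_not_reachable (not_reachable_mul_left hr)]
    exact Nat.zero_le _

lemma dist_mul_left (T : Set H) (a x y : H) :
    (cayley T).dist (a * x) (a * y) = (cayley T).dist x y := by
  refine le_antisymm (dist_mul_left_le T a x y) ?_
  have := dist_mul_left_le T a⁻¹ (a * x) (a * y)
  simpa using this

lemma cayley_preconnected (T : Finset H) (hTgen : Subgroup.closure (T : Set H) = ⊤) :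
    (cayley (T : Set H)).Preconnected := by
  have key : ∀ h : H, (cayley (T : Set H)).Reachable 1 h := by
    intro h
    have hh : h ∈ Subgroup.closure (T : Set H) := hTgen ▸ Subgroup.mem_top h
    induction hh using Subgroup.closure_induction with
    | mem t ht =>
      by_cases h1 : (1 : H) = t
      · exact h1 ▸ SimpleGraph.Reachable.refl 1
      · refine SimpleGraph.Adj.reachable ?_
        rw [cayley, SimpleGraph.fromRel_adj]
        exact ⟨h1, Or.inl (by simpa using ht)⟩
    | one => exact SimpleGraph.Reachable.refl 1
    | mul x y _ _ ihx ihy =>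
      refine ihx.trans ?_
      have := ihy.map (mulLeftIso (T : Set H) x).toHom
      simpa using this
    | inv x _ ih =>
      have := ih.map (mulLeftIso (T : Set H) x⁻¹).toHom
      refine (SimpleGraph.Reachable.symm ?_)
      simpa using this
  intro x y
  exact (key x).symm.trans (key y)

lemma cayley_connected (T : Finset H) (hTgen : Subgroup.closure (T : Set H) = ⊤) :
    (cayley (T : Set H)).Connected := by
  have : Nonempty H := ⟨1⟩
  exact SimpleGraph.Connected.mk (cayley_preconnected T hTgen)

lemma adj_step {S : Finset G} (hSsym : ∀ s ∈ S, s⁻¹ ∈ S) {x b : G}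
    (h : (cayley (S : Set G)).Adj x b) : x⁻¹ * b ∈ S := by
  rw [cayley, SimpleGraph.fromRel_adj] at h
  rcases h.2 with h' | h'
  · simpa using h'
  · have := hSsym _ h'
    simpa [mul_inv_rev] using this

lemma sint_elemMove {S : Finset G} {T : Finset H} {n K : ℕ}
    {σ : G → ↥S → ↥(ball (T : Set H) n 1)} (hσ : memY S T n K σ)
    {w₁ w₂ : List ↥S} (h : ElemMove S K w₁ w₂) (g : G) :
    sint (fun g s => ((σ g s : H))) g w₁ = sint (fun g s => ((σ g s : H))) g w₂ := by
  obtain ⟨u, v, v', x, h1, h2, hv, hv', hvv⟩ := h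
  subst h1; subst h2
  simp only [sint_append, wordProd_append]
  rw [hσ (g * wordProd S u) v v' hv hv' hvv, hvv]

lemma sint_eq_of_wordProd_eq {S : Finset G} {T : Finset H} {n K : ℕ}
    (hpres : PresentedBy S K)
    {σ : G → ↥S → ↥(ball (T : Set H) n 1)} (hσ : memY S T n K σ)
    {w₁ w₂ : List ↥S} (h : wordProd S w₁ = wordProd S w₂) (g : G) :
    sint (fun g s => ((σ g s : H))) g w₁ = sint (fun g s => ((σ g s : H))) g w₂ := by
  have hrel := hpres w₁ w₂ h
  clear h
  induction hrel with
  | refl => rfl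
  | tail _ h2 ih => exact ih.trans (sint_elemMove hσ h2 g)

lemma sint_df {S : Finset G} (f : G → H) (g : G) (w : List ↥S) :
    sint (fun g s => (f g)⁻¹ * f (g * ↑s)) g w = (f g)⁻¹ * f (g * wordProd S w) := by
  induction w generalizing g with
  | nil => simp [sint, wordProd_nil]
  | cons s w ih => simp [sint, ih, wordProd_cons, mul_assoc]

lemma lip_of_df {S : Finset G} {T : Finset H} {n : ℕ}
    (hSsym : ∀ s ∈ S, s⁻¹ ∈ S) (hSgen : Subgroup.closure (S : Set G) = ⊤)
    (hTgen : Subgroup.closure (T : Set H) = ⊤)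
    (f : G → H) (σ : G → ↥S → ↥(ball (T : Set H) n 1))
    (hdf : ∀ (g : G) (s : ↥S), ((σ g s : H)) = (f g)⁻¹ * f (g * ↑s)) :
    IsLip (S : Set G) (T : Set H) n f := by
  have hconn := cayley_connected T hTgen
  have hstep : ∀ (x : G) (s : ↥S), (cayley (T : Set H)).dist (f x) (f (x * ↑s)) ≤ n := by
    intro x s
    have hb : ((σ x s : H)) ∈ ball (T : Set H) n 1 := (σ x s).2
    have hfx : f (x * ↑s) = f x * (σ x s : H) := by rw [hdf]; group
    rw [hfx]
    calc (cayley (T : Set H)).dist (f x) (f x * (σ x s : H))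
        = (cayley (T : Set H)).dist (f x * 1) (f x * (σ x s : H)) := by rw [mul_one]
      _ = (cayley (T : Set H)).dist 1 ((σ x s : H)) := dist_mul_left _ _ _ _
      _ ≤ n := hb
  have main : ∀ {x y : G} (p : (cayley (S : Set G)).Walk x y),
      (cayley (T : Set H)).dist (f x) (f y) ≤ n * p.length := by
    intro x y p
    induction p with
    | nil => simp [SimpleGraph.dist_self]
    | @cons x b y hadj p ih =>
      have hs := adj_step hSsym hadj
      have h1 : (cayley (T : Set H)).dist (f x) (f b) ≤ n := by
        have := hstep x ⟨x⁻¹ * b, hs⟩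
        simpa using this
      calc (cayley (T : Set H)).dist (f x) (f y)
          ≤ (cayley (T : Set H)).dist (f x) (f b) + (cayley (T : Set H)).dist (f b) (f y) :=
            hconn.dist_triangle
        _ ≤ n + n * p.length := add_le_add h1 ih
        _ = n * (SimpleGraph.Walk.cons hadj p).length := by
            rw [SimpleGraph.Walk.length_cons, Nat.mul_succ, Nat.add_comm]
  intro x y
  have hSconn := cayley_connected S hSgen
  obtain ⟨p, hp⟩ := hSconn.exists_walk_length_eq_dist x y
  have := main p
  rwa [hp] at this

end Stmt13Aux

/-- if `G` is presented over `S` by relators of length at most `K`, then for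
every `σ ∈ Y_n` the function `f(g) = ∫_{1_G·w} σ` (for any word `w` representing `g`) is
well-defined, `n`-Lipschitz, satisfies `f(1) = 1` and `df = σ`; consequently
`Y_n = {df : f ∈ Lip_n(G,H)}`. -/
theorem stmt13 {G H : Type*} [Group G] [Group H] (S : Finset G) (T : Finset H)
    (hSsym : ∀ s ∈ S, s⁻¹ ∈ S) (hSgen : Subgroup.closure (S : Set G) = ⊤)
    (hTsym : ∀ t ∈ T, t⁻¹ ∈ T) (hTgen : Subgroup.closure (T : Set H) = ⊤)
    (K n : ℕ) (hpres : PresentedBy S K) :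
    (∀ σ : G → ↥S → ↥(ball (T : Set H) n 1), memY S T n K σ →
      ∃ f : G → H,
        (∀ (g : G) (w : List ↥S), wordProd S w = g →
          sint (fun g s => ((σ g s : H))) 1 w = f g) ∧
        IsLip (S : Set G) (T : Set H) n f ∧ f 1 = 1 ∧
        (∀ (g : G) (s : ↥S), ((σ g s : H)) = (f g)⁻¹ * f (g * ↑s))) ∧
    {σ : G → ↥S → ↥(ball (T : Set H) n 1) | memY S T n K σ} =
      {σ : G → ↥S → ↥(ball (T : Set H) n 1) |
        ∃ f : G → H, IsLip (S : Set G) (T : Set H) n f ∧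
          ∀ (g : G) (s : ↥S), ((σ g s : H)) = (f g)⁻¹ * f (g * ↑s)} := by
  have main1 : ∀ σ : G → ↥S → ↥(ball (T : Set H) n 1), memY S T n K σ →
      ∃ f : G → H,
        (∀ (g : G) (w : List ↥S), wordProd S w = g →
          sint (fun g s => ((σ g s : H))) 1 w = f g) ∧
        IsLip (S : Set G) (T : Set H) n f ∧ f 1 = 1 ∧
        (∀ (g : G) (s : ↥S), ((σ g s : H)) = (f g)⁻¹ * f (g * ↑s)) := by
    intro σ hσ
    choose rep hrep using fun g => Stmt13Aux.exists_word S hSsym hSgen g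
    set σ' : G → ↥S → H := fun g s => ((σ g s : H)) with hσ'def
    refine ⟨fun g => sint σ' 1 (rep g), ?_, ?_, ?_, ?_⟩
    case _ =>
      intro g w hw
      exact Stmt13Aux.sint_eq_of_wordProd_eq hpres hσ (by rw [hw, hrep g]) 1
    case _ =>
      have hwd : ∀ (g : G) (w : List ↥S), wordProd S w = g →
          sint σ' 1 w = sint σ' 1 (rep g) := fun g w hw =>
        Stmt13Aux.sint_eq_of_wordProd_eq hpres hσ (by rw [hw, hrep g]) 1
      have hdf : ∀ (g : G) (s : ↥S),
          ((σ g s : H)) = (sint σ' 1 (rep g))⁻¹ * sint σ' 1 (rep (g * ↑s)) := by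
        intro g s
        have h1 : sint σ' 1 (rep g ++ [s]) = sint σ' 1 (rep (g * ↑s)) :=
          hwd _ _ (by rw [Stmt13Aux.wordProd_append, hrep g,
            Stmt13Aux.wordProd_cons, Stmt13Aux.wordProd_nil, mul_one])
        rw [Stmt13Aux.sint_append, one_mul, hrep g] at h1
        simp only [sint, mul_one] at h1
        rw [← h1, hσ'def]
        group
      exact Stmt13Aux.lip_of_df hSsym hSgen hTgen _ σ hdf
    case _ =>
      show sint σ' 1 (rep 1) = 1
      have := Stmt13Aux.sint_eq_of_wordProd_eq hpres hσ (w₁ := rep 1) (w₂ := [])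
        (by rw [Stmt13Aux.wordProd_nil, hrep 1]) 1
      simpa [sint] using this
    case _ =>
      intro g s
      show ((σ g s : H)) = (sint σ' 1 (rep g))⁻¹ * sint σ' 1 (rep (g * ↑s))
      have hwd : ∀ (g : G) (w : List ↥S), wordProd S w = g →
          sint σ' 1 w = sint σ' 1 (rep g) := fun g w hw =>
        Stmt13Aux.sint_eq_of_wordProd_eq hpres hσ (by rw [hw, hrep g]) 1
      have h1 : sint σ' 1 (rep g ++ [s]) = sint σ' 1 (rep (g * ↑s)) :=
        hwd _ _ (by rw [Stmt13Aux.wordProd_append, hrep g,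
          Stmt13Aux.wordProd_cons, Stmt13Aux.wordProd_nil, mul_one])
      rw [Stmt13Aux.sint_append, one_mul, hrep g] at h1
      simp only [sint, mul_one] at h1
      rw [← h1, hσ'def]
      group
  refine ⟨main1, ?_⟩
  ext σ
  simp only [Set.mem_setOf_eq]
  constructor
  · intro hσ
    obtain ⟨f, _, hlip, _, hdf⟩ := main1 σ hσ
    exact ⟨f, hlip, hdf⟩
  · rintro ⟨f, hlip, hdf⟩
    intro g w₁ w₂ _ _ hww
    simp only [hdf]
    rw [Stmt13Aux.sint_df, Stmt13Aux.sint_df, hww]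
end
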